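/- arXiv:1602.04952 — 10 statements merged into one kernel-verified Lean document; each statement's English description precedes it below -/
import Mathlib

section
/- Let k ≥ 2 be an integer. For every continuous function N : (0,1] × [0,∞) → [0,1] satisfying the column requirement, the double integral ∫₀^∞ ∫₀¹ (1/x)·N(x,t)^k dx dt, taken in the extended nonnegative reals [0,∞], is at least (3k−1)/(k(k+1)). -/
open MeasureTheory Set Real

/-- Tangent-line / AM-GM inequality: `(1-k) z^k + k z^{k-1} y ≤ y^k`. -/
lemma tangent_ineq (k : ℕ) (hk : 2 ≤ k) {y z : ℝ} (hy : 0 ≤ y) (hz : 0 ≤ z) :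
    (1 - (k:ℝ)) * z ^ k + (k:ℝ) * z ^ (k - 1) * y ≤ y ^ k := by
  have hk1 : k - 1 + 1 = k := by omega
  rcases eq_or_lt_of_le hz with h0 | hzpos
  · have : z = 0 := h0.symm
    subst this
    have h1 : (0:ℝ) ^ k = 0 := zero_pow (by omega)
    have h2 : (0:ℝ) ^ (k - 1) = 0 := zero_pow (by omega)
    rw [h1, h2]
    simpa using pow_nonneg hy k
  · have hber : 1 + (k:ℝ) * (y / z - 1) ≤ (1 + (y / z - 1)) ^ k := by
      apply one_add_mul_le_pow
      have : (0:ℝ) ≤ y / z := div_nonneg hy hz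
      linarith
    have h2 : (1 + (y / z - 1)) ^ k = (y / z) ^ k := by ring_nf
    rw [h2, div_pow] at hber
    have hzk : (0:ℝ) < z ^ k := pow_pos hzpos k
    have := mul_le_mul_of_nonneg_left hber (le_of_lt hzk)
    have hcan : z ^ k * (y ^ k / z ^ k) = y ^ k := by
      field_simp
    rw [hcan] at this
    calc (1 - (k:ℝ)) * z ^ k + (k:ℝ) * z ^ (k - 1) * y
        = z ^ k * (1 + (k:ℝ) * (y / z - 1)) := by
          have : z ^ k = z ^ (k-1) * z := by rw [← pow_succ, hk1]
          rw [this]; field_simp; ring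
      _ ≤ y ^ k := this

/-- Key pointwise inequality in the bulk region. -/
lemma key_ineq (k : ℕ) (hk : 2 ≤ k) {b x y : ℝ} (hb : 0 ≤ b) (hx : 0 < x) (hy : 0 ≤ y) :
    (1 - (k:ℝ)) * b ^ k * x ^ (((k:ℝ) - 1)⁻¹) + (k:ℝ) * b ^ (k - 1) * y ≤ y ^ k / x := by
  set r : ℝ := ((k:ℝ) - 1)⁻¹ with hr
  have hK1 : (0:ℝ) < (k:ℝ) - 1 := by
    have : (2:ℝ) ≤ (k:ℝ) := by exact_mod_cast hk
    linarith
  have hrk1 : r * ((k:ℝ) - 1) = 1 := inv_mul_cancel₀ (ne_of_gt hK1)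
  have hcast : ((k - 1 : ℕ) : ℝ) = (k:ℝ) - 1 := by
    have : 1 ≤ k := by omega
    push_cast [this]; ring
  set X : ℝ := x ^ r with hX
  have hXpos : 0 < X := rpow_pos_of_pos hx r
  have hXk1 : X ^ (k - 1) = x := by
    rw [hX, ← rpow_natCast (x ^ r) (k-1), ← rpow_mul hx.le, hcast, hrk1, rpow_one]
  have hXk : X ^ k = x * X := by
    have hk1 : k - 1 + 1 = k := by omega
    rw [← hk1, pow_succ, hXk1]
  have htan := tangent_ineq k hk hy (mul_nonneg hb hXpos.le) (z := b * X)
  rw [mul_pow, mul_pow, hXk, hXk1] at htan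
  rw [le_div_iff₀ hx]
  calc ((1 - (k:ℝ)) * b ^ k * X + (k:ℝ) * b ^ (k - 1) * y) * x
      = (1 - (k:ℝ)) * (b ^ k * (x * X)) + (k:ℝ) * (b ^ (k-1) * x) * y := by ring
    _ ≤ y ^ k := htan

lemma chain_lemma (k : ℕ) (N : ℝ → ℝ → ℝ) (t : ℝ)
    (hmeas : AEMeasurable (fun x => N x t) (volume.restrict (Ioc 0 1)))
    (hrange : ∀ x ∈ Ioc (0:ℝ) 1, N x t ∈ Icc (0:ℝ) 1)
    (hcol : (∫ x in Ioc (0:ℝ) 1, (1 - N x t)) ≤ t)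
    (φ : ℝ → ℝ) (hφ : IntegrableOn φ (Ioc 0 1))
    (μt : ℝ) (hμ : 0 ≤ μt)
    (hpt : ∀ x ∈ Ioc (0:ℝ) 1, ∀ y ∈ Icc (0:ℝ) 1, φ x + μt * (y - 1) ≤ (1/x) * y ^ k) :
    ENNReal.ofReal ((∫ x in Ioc (0:ℝ) 1, φ x) - μt * t) ≤
      ∫⁻ x in Ioc (0:ℝ) 1, ENNReal.ofReal ((1 / x) * N x t ^ k) := by
  have hvol : volume (Ioc (0:ℝ) 1) = 1 := by
    rw [Real.volume_Ioc]; norm_num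
  have hNint : IntegrableOn (fun x => N x t) (Ioc 0 1) := by
    apply Integrable.mono' (integrable_const 1) hmeas.aestronglyMeasurable
    filter_upwards [ae_restrict_mem measurableSet_Ioc] with x hx
    have := hrange x hx
    rw [Real.norm_eq_abs, abs_le]
    constructor <;> linarith [this.1, this.2]
  set g : ℝ → ℝ := fun x => φ x + μt * (N x t - 1) with hg
  have hgint : IntegrableOn g (Ioc 0 1) :=
    hφ.add (((hNint.sub (integrable_const 1)).const_mul μt))
  have hIg : (∫ x in Ioc (0:ℝ) 1, φ x) - μt * t ≤ ∫ x in Ioc (0:ℝ) 1, g x := by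
    have hsub : IntegrableOn (fun x => μt * (N x t - 1)) (Ioc (0:ℝ) 1) :=
      (hNint.sub (integrable_const 1)).const_mul μt
    rw [hg]
    simp only []
    rw [integral_add hφ hsub, integral_const_mul]
    have h1 : ∫ x in Ioc (0:ℝ) 1, (N x t - 1) = - ∫ x in Ioc (0:ℝ) 1, (1 - N x t) := by
      rw [← integral_neg]
      congr 1 with x
      ring
    rw [h1]
    have h2 : μt * (- ∫ x in Ioc (0:ℝ) 1, (1 - N x t)) ≥ μt * (-t) := by
      apply mul_le_mul_of_nonneg_left _ hμ
      linarith
    linarith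
  set gp : ℝ → ℝ := fun x => max (g x) 0 with hgp
  have hgpint : IntegrableOn gp (Ioc 0 1) := hgint.sup (integrable_const 0)
  have hIgp : ∫ x in Ioc (0:ℝ) 1, g x ≤ ∫ x in Ioc (0:ℝ) 1, gp x :=
    integral_mono hgint hgpint (fun x => le_max_left _ _)
  have heq : ENNReal.ofReal (∫ x in Ioc (0:ℝ) 1, gp x) =
      ∫⁻ x in Ioc (0:ℝ) 1, ENNReal.ofReal (gp x) := by
    apply ofReal_integral_eq_lintegral_ofReal hgpint
    filter_upwards with x using le_max_right _ _
  have hfinal : ∫⁻ x in Ioc (0:ℝ) 1, ENNReal.ofReal (gp x) ≤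
      ∫⁻ x in Ioc (0:ℝ) 1, ENNReal.ofReal ((1 / x) * N x t ^ k) := by
    apply lintegral_mono_ae
    filter_upwards [ae_restrict_mem measurableSet_Ioc] with x hx
    apply ENNReal.ofReal_le_ofReal
    apply max_le
    · have := hpt x hx (N x t) (hrange x hx)
      simpa [hg] using this
    · exact mul_nonneg (one_div_nonneg.mpr hx.1.le) (pow_nonneg (hrange x hx).1 k)
  calc ENNReal.ofReal ((∫ x in Ioc (0:ℝ) 1, φ x) - μt * t)
      ≤ ENNReal.ofReal (∫ x in Ioc (0:ℝ) 1, gp x) :=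
        ENNReal.ofReal_le_ofReal (le_trans hIg hIgp)
    _ = ∫⁻ x in Ioc (0:ℝ) 1, ENNReal.ofReal (gp x) := heq
    _ ≤ _ := hfinal

lemma basic_facts (k : ℕ) (hk : 2 ≤ k) :
    (2:ℝ) ≤ (k:ℝ) ∧ (0:ℝ) < (k:ℝ) - 1 ∧ (0:ℝ) < (((k:ℝ) - 1)⁻¹) ∧
      ((k - 1 : ℕ) : ℝ) = (k:ℝ) - 1 := by
  have h2 : (2:ℝ) ≤ (k:ℝ) := by exact_mod_cast hk
  have h1 : (0:ℝ) < (k:ℝ) - 1 := by linarith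
  refine ⟨h2, h1, inv_pos.mpr h1, ?_⟩
  have : 1 ≤ k := by omega
  push_cast [this]; ring

lemma regime1 (k : ℕ) (hk : 2 ≤ k) (N : ℝ → ℝ → ℝ) (t : ℝ)
    (hmeas : AEMeasurable (fun x => N x t) (volume.restrict (Ioc 0 1)))
    (hrange : ∀ x ∈ Ioc (0:ℝ) 1, N x t ∈ Icc (0:ℝ) 1)
    (hcol : (∫ x in Ioc (0:ℝ) 1, (1 - N x t)) ≤ t)
    (ht : t ∈ Ioc (0:ℝ) (1/(k:ℝ))) :
    ENNReal.ofReal (((k:ℝ) - 1)/(k:ℝ) - log ((k:ℝ) * t)) ≤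
      ∫⁻ x in Ioc (0:ℝ) 1, ENNReal.ofReal ((1 / x) * N x t ^ k) := by
  obtain ⟨h2, hK1, hrpos, hcast⟩ := basic_facts k hk
  set K : ℝ := (k:ℝ) with hKdef
  set r : ℝ := (K - 1)⁻¹ with hrdef
  have hKpos : (0:ℝ) < K := by linarith
  set a : ℝ := K * t with hadef
  have hapos : 0 < a := mul_pos hKpos ht.1
  have ha1 : a ≤ 1 := by
    rw [hadef]
    calc K * t ≤ K * (1/K) := by
          apply mul_le_mul_of_nonneg_left ht.2 hKpos.le
      _ = 1 := by field_simp
  set b : ℝ := a ^ (-r) with hbdef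
  have hbpos : 0 < b := rpow_pos_of_pos hapos _
  have hrk1 : r * (K - 1) = 1 := inv_mul_cancel₀ (ne_of_gt hK1)
  have hbk1 : b ^ (k - 1) = a⁻¹ := by
    rw [hbdef, ← rpow_natCast (a ^ (-r)) (k-1), ← rpow_mul hapos.le, hcast]
    rw [show (-r) * (K - 1) = -1 by rw [neg_mul, hrk1], rpow_neg_one]
  have hbk : b ^ k * a ^ ((1:ℝ) + r) = 1 := by
    rw [hbdef, ← rpow_natCast (a ^ (-r)) k, ← rpow_mul hapos.le]
    rw [← rpow_add hapos]
    have heq0 : -r * K + (1 + r) = 0 := by linear_combination -hrk1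
    rw [heq0, rpow_zero]
  -- pointwise inequality
  have hpt : ∀ x ∈ Ioc (0:ℝ) 1, ∀ y ∈ Icc (0:ℝ) 1,
      (if x ≤ a then (1 - K) * b ^ k * x ^ r + K * b ^ (k-1) else 1/x)
        + (K * b ^ (k-1)) * (y - 1) ≤ (1/x) * y ^ k := by
    intro x hx y hy
    have hxpos : 0 < x := hx.1
    have hyk : (1/x) * y ^ k = y ^ k / x := by ring
    rw [hyk]
    by_cases hxa : x ≤ a
    · rw [if_pos hxa]
      have hkey := key_ineq k hk hbpos.le hxpos hy.1
      calc (1 - K) * b ^ k * x ^ r + K * b ^ (k-1) + K * b ^ (k-1) * (y - 1)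
          = (1 - K) * b ^ k * x ^ r + K * b ^ (k-1) * y := by ring
        _ ≤ y ^ k / x := hkey
    · rw [if_neg hxa]
      push_neg at hxa
      have hy1 : y - 1 ≤ 0 := by linarith [hy.2]
      have h1 : K * b ^ (k-1) * (y - 1) ≤ (K / x) * (y - 1) := by
        apply mul_le_mul_of_nonpos_right _ hy1
        rw [hbk1, div_le_iff₀ hxpos]
        calc K ≤ K * (x / a) := by
              rw [le_mul_iff_one_le_right hKpos, le_div_iff₀ hapos, one_mul]
              exact hxa.le
          _ = K * a⁻¹ * x := by ring
      have h2 : 1 + K * (y - 1) ≤ y ^ k := by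
        have h3 := tangent_ineq k hk hy.1 (zero_le_one) (z := 1)
        simp only [one_pow, mul_one] at h3
        linarith
      calc 1/x + K * b ^ (k-1) * (y - 1) ≤ 1/x + (K / x) * (y - 1) := by linarith
        _ = (1 + K * (y - 1)) / x := by ring
        _ ≤ y ^ k / x := by gcongr
  -- integrability of the certificate
  have hrint : IntegrableOn (fun x : ℝ => x ^ r) (Ioc 0 a) := by
    exact (intervalIntegral.intervalIntegrable_rpow' (by linarith : (-1:ℝ) < r)).1
  have hint1 : IntegrableOn (fun x : ℝ => (1 - K) * b ^ k * x ^ r + K * b ^ (k-1)) (Ioc 0 a) :=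
    (hrint.const_mul _).add (integrable_const _)
  have hint2 : IntegrableOn (fun x : ℝ => 1/x) (Ioc a 1) := by
    apply (intervalIntegral.intervalIntegrable_one_div (f := fun x => x) ?_ ?_).1
    · intro x hxm
      rw [uIcc_of_le ha1] at hxm
      exact ne_of_gt (lt_of_lt_of_le hapos hxm.1)
    · exact continuousOn_id
  have hφint : IntegrableOn
      (fun x => if x ≤ a then (1 - K) * b ^ k * x ^ r + K * b ^ (k-1) else 1/x) (Ioc 0 1) := by
    rw [show Ioc (0:ℝ) 1 = Ioc 0 a ∪ Ioc a 1 from (Ioc_union_Ioc_eq_Ioc hapos.le ha1).symm]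
    apply IntegrableOn.union
    · apply (integrableOn_congr_fun ?_ measurableSet_Ioc).mpr hint1
      intro x hx; simp only [if_pos hx.2]
    · apply (integrableOn_congr_fun ?_ measurableSet_Ioc).mpr hint2
      intro x hx; simp only [if_neg (not_le.mpr hx.1)]
  -- value of the integral
  have hval : (∫ x in Ioc (0:ℝ) 1,
      (if x ≤ a then (1 - K) * b ^ k * x ^ r + K * b ^ (k-1) else 1/x))
      = (1 - K) * ((K-1)/K) + K - log a := by
    rw [show Ioc (0:ℝ) 1 = Ioc 0 a ∪ Ioc a 1 from (Ioc_union_Ioc_eq_Ioc hapos.le ha1).symm]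
    rw [setIntegral_union ((Ioc_disjoint_Ioc_of_le le_rfl)) measurableSet_Ioc
      ((integrableOn_congr_fun (fun x hx => by simp only [if_pos hx.2]) measurableSet_Ioc).mpr hint1)
      ((integrableOn_congr_fun (fun x hx => by simp only [if_neg (not_le.mpr hx.1)]) measurableSet_Ioc).mpr hint2)]
    have e1 : ∫ x in Ioc (0:ℝ) a,
        (if x ≤ a then (1 - K) * b ^ k * x ^ r + K * b ^ (k-1) else 1/x)
        = ∫ x in Ioc (0:ℝ) a, ((1 - K) * b ^ k * x ^ r + K * b ^ (k-1)) :=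
      setIntegral_congr_fun measurableSet_Ioc (fun x hx => by simp only [if_pos hx.2])
    have e2 : ∫ x in Ioc a 1,
        (if x ≤ a then (1 - K) * b ^ k * x ^ r + K * b ^ (k-1) else 1/x)
        = ∫ x in Ioc a 1, (1/x) :=
      setIntegral_congr_fun measurableSet_Ioc (fun x hx => by simp only [if_neg (not_le.mpr hx.1)])
    rw [e1, e2]
    have i1 : ∫ x in Ioc (0:ℝ) a, ((1 - K) * b ^ k * x ^ r + K * b ^ (k-1))
        = (1 - K) * b ^ k * (a ^ ((1:ℝ) + r) / (r + 1)) + K * b ^ (k-1) * a := by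
      rw [integral_add (hrint.const_mul _) (integrable_const _), integral_const_mul]
      congr 1
      · congr 1
        rw [← intervalIntegral.integral_of_le hapos.le]
        rw [integral_rpow (Or.inl (by linarith))]
        rw [Real.zero_rpow (by positivity)]
        rw [show r + 1 = 1 + r by ring]
        ring
      · rw [setIntegral_const, measureReal_def, Real.volume_Ioc, smul_eq_mul]
        rw [ENNReal.toReal_ofReal (by linarith)]
        ring
    have i2 : ∫ x in Ioc a 1, (1/x) = - log a := by
      rw [← intervalIntegral.integral_of_le ha1]
      rw [integral_one_div (by
        rw [uIcc_of_le ha1]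
        intro hmem
        exact absurd hmem.1 (not_le.mpr hapos))]
      rw [one_div, log_inv]
    rw [i1, i2]
    have c1 : (1 - K) * b ^ k * (a ^ ((1:ℝ) + r) / (r + 1)) = (1 - K) * ((K-1)/K) := by
      have : b ^ k * a ^ ((1:ℝ) + r) = 1 := hbk
      have hr1 : r + 1 = K / (K - 1) := by
        rw [hrdef]
        field_simp
        ring
      rw [div_eq_mul_inv, ← mul_assoc, mul_assoc (1-K), this, mul_one, hr1]
      congr 1
      rw [inv_div]
    have c2 : K * b ^ (k-1) * a = K := by
      rw [hbk1, mul_assoc, inv_mul_cancel₀ (ne_of_gt hapos), mul_one]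
    rw [c1, c2]
    ring
  -- apply the chain lemma
  have hchain := chain_lemma k N t hmeas hrange hcol _ hφint (K * b ^ (k-1))
    (le_of_lt (mul_pos hKpos (pow_pos hbpos _))) hpt
  refine le_trans (ENNReal.ofReal_le_ofReal ?_) hchain
  rw [hval, hbk1]
  have hμt : K * a⁻¹ * t = 1 := by
    rw [hadef]
    field_simp
    exact div_self ht.1.ne'
  rw [hμt]
  have : (1 - K) * ((K - 1)/K) + K - log a - 1 = (K - 1)/K - log a := by
    field_simp
    ring
  rw [this, hadef]

lemma regime2 (k : ℕ) (hk : 2 ≤ k) (N : ℝ → ℝ → ℝ) (t : ℝ)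
    (hmeas : AEMeasurable (fun x => N x t) (volume.restrict (Ioc 0 1)))
    (hrange : ∀ x ∈ Ioc (0:ℝ) 1, N x t ∈ Icc (0:ℝ) 1)
    (hcol : (∫ x in Ioc (0:ℝ) 1, (1 - N x t)) ≤ t)
    (ht : t ∈ Ioc (1/(k:ℝ)) 1) :
    ENNReal.ofReal (((k:ℝ) - 1)/(k:ℝ) * ((k:ℝ) * (1 - t)/((k:ℝ) - 1)) ^ k) ≤
      ∫⁻ x in Ioc (0:ℝ) 1, ENNReal.ofReal ((1 / x) * N x t ^ k) := by
  obtain ⟨h2, hK1, hrpos, hcast⟩ := basic_facts k hk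
  set K : ℝ := (k:ℝ) with hKdef
  set r : ℝ := (K - 1)⁻¹ with hrdef
  have hKpos : (0:ℝ) < K := by linarith
  set b : ℝ := K * (1 - t) / (K - 1) with hbdef
  have hbnn : 0 ≤ b := by
    apply div_nonneg _ hK1.le
    apply mul_nonneg hKpos.le
    linarith [ht.2]
  have hpt : ∀ x ∈ Ioc (0:ℝ) 1, ∀ y ∈ Icc (0:ℝ) 1,
      ((1 - K) * b ^ k * x ^ r + K * b ^ (k-1))
        + (K * b ^ (k-1)) * (y - 1) ≤ (1/x) * y ^ k := by
    intro x hx y hy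
    have hkey := key_ineq k hk hbnn hx.1 hy.1
    have hyk : (1/x) * y ^ k = y ^ k / x := by ring
    rw [hyk]
    calc (1 - K) * b ^ k * x ^ r + K * b ^ (k-1) + K * b ^ (k-1) * (y - 1)
        = (1 - K) * b ^ k * x ^ r + K * b ^ (k-1) * y := by ring
      _ ≤ y ^ k / x := hkey
  have hrint : IntegrableOn (fun x : ℝ => x ^ r) (Ioc 0 1) :=
    (intervalIntegral.intervalIntegrable_rpow' (by linarith : (-1:ℝ) < r)).1
  have hφint : IntegrableOn (fun x : ℝ => (1 - K) * b ^ k * x ^ r + K * b ^ (k-1)) (Ioc 0 1) :=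
    (hrint.const_mul _).add (integrable_const _)
  have hval : (∫ x in Ioc (0:ℝ) 1, ((1 - K) * b ^ k * x ^ r + K * b ^ (k-1)))
      = (1 - K) * b ^ k / (r + 1) + K * b ^ (k-1) := by
    rw [integral_add (hrint.const_mul _) (integrable_const _), integral_const_mul]
    congr 1
    · rw [← intervalIntegral.integral_of_le zero_le_one]
      rw [integral_rpow (Or.inl (by linarith))]
      rw [Real.zero_rpow (by positivity), Real.one_rpow]
      field_simp
      ring
    · rw [setIntegral_const, measureReal_def, Real.volume_Ioc, smul_eq_mul]
      norm_num
  have hchain := chain_lemma k N t hmeas hrange hcol _ hφint (K * b ^ (k-1))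
    (mul_nonneg hKpos.le (pow_nonneg hbnn _)) hpt
  refine le_trans (ENNReal.ofReal_le_ofReal ?_) hchain
  rw [hval]
  have hk1 : k - 1 + 1 = k := by omega
  have hbsucc : b ^ (k-1) * b = b ^ k := by rw [← pow_succ, hk1]
  have h1t : 1 - t = b * (K - 1) / K := by
    rw [hbdef]; field_simp
  have hr1 : r + 1 = K / (K - 1) := by
    rw [hrdef]; field_simp; ring
  have expand : (1 - K) * b ^ k / (r + 1) + K * b ^ (k-1) - K * b ^ (k-1) * t
      = (1 - K) * b ^ k / (r + 1) + K * b ^ (k-1) * (1 - t) := by ring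
  rw [expand, h1t, hr1]
  have : K * b ^ (k-1) * (b * (K - 1) / K) = (K - 1) * b ^ k := by
    rw [← hbsucc]; field_simp
  rw [this]
  have : (1 - K) * b ^ k / (K / (K - 1)) = -((K-1)^2/K) * b ^ k := by
    field_simp; ring
  rw [this]
  have : -((K-1)^2/K) * b ^ k + (K - 1) * b ^ k = (K - 1)/K * b ^ k := by
    field_simp; ring
  rw [this]

lemma log_integrableOn {c : ℝ} (hc : 0 < c) (hc1 : c ≤ 1) :
    IntegrableOn Real.log (Ioc 0 c) := by
  have hg : IntegrableOn (fun t : ℝ => 2 * t ^ (-(1/2) : ℝ)) (Ioc 0 c) :=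
    ((intervalIntegral.intervalIntegrable_rpow' (by norm_num : (-1:ℝ) < -(1/2))).1).const_mul 2
  apply Integrable.mono' hg Real.measurable_log.aestronglyMeasurable
  filter_upwards [ae_restrict_mem measurableSet_Ioc] with t ht
  have htpos : 0 < t := ht.1
  have ht1 : t ≤ 1 := le_trans ht.2 hc1
  have hlognp : Real.log t ≤ 0 := Real.log_nonpos htpos.le ht1
  rw [Real.norm_eq_abs, abs_of_nonpos hlognp]
  have hu : 0 < t ^ (-(1/2) : ℝ) := rpow_pos_of_pos htpos _
  have hlu : Real.log (t ^ (-(1/2) : ℝ)) = -(1/2) * Real.log t := Real.log_rpow htpos _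
  have := Real.log_le_sub_one_of_pos hu
  rw [hlu] at this
  linarith
lemma integral_log_Ioc {c : ℝ} (hc : 0 < c) (hc1 : c ≤ 1) :
    ∫ t in Ioc (0:ℝ) c, Real.log t = c * Real.log c - c := by
  have hii : IntervalIntegrable Real.log volume 0 c := by
    constructor
    · exact log_integrableOn hc hc1
    · rw [Ioc_eq_empty (by linarith)]
      exact integrableOn_empty
  have := intervalIntegral.integral_eq_sub_of_hasDerivAt_of_tendsto
    (f := fun t => t * Real.log t - t) (f' := Real.log) hc
    (fun x hx => by
      have h := (Real.hasDerivAt_mul_log (ne_of_gt hx.1)).sub (hasDerivAt_id x)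
      simp only [add_sub_cancel_right] at h
      exact h)
    hii
    (by
      have h := ((Real.continuous_mul_log.sub continuous_id).tendsto 0).mono_left
        (nhdsWithin_le_nhds (s := Ioi (0:ℝ)))
      convert h using 2 <;> simp)
    (by
      have h := ((Real.continuous_mul_log.sub continuous_id).tendsto c).mono_left
        (nhdsWithin_le_nhds (s := Iio c))
      convert h using 2 <;> simp)
  rw [← intervalIntegral.integral_of_le hc.le, this]
  simp

lemma outer1 (k : ℕ) (hk : 2 ≤ k) :
    ∫ t in Ioc (0:ℝ) (1/(k:ℝ)), (((k:ℝ) - 1)/(k:ℝ) - Real.log ((k:ℝ) * t))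
      = ((k:ℝ) - 1)/(k:ℝ)^2 + 1/(k:ℝ) := by
  have h2 : (2:ℝ) ≤ (k:ℝ) := by exact_mod_cast hk
  set K : ℝ := (k:ℝ) with hKdef
  have hKpos : (0:ℝ) < K := by linarith
  have hcpos : (0:ℝ) < 1/K := by positivity
  have hc1 : 1/K ≤ 1 := by
    rw [div_le_one hKpos]; linarith
  have hcongr : ∫ t in Ioc (0:ℝ) (1/K), ((K - 1)/K - Real.log (K * t))
      = ∫ t in Ioc (0:ℝ) (1/K), (((K - 1)/K - Real.log K) - Real.log t) := by
    apply setIntegral_congr_fun measurableSet_Ioc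
    intro t ht
    show (K - 1)/K - Real.log (K * t) = ((K - 1)/K - Real.log K) - Real.log t
    rw [Real.log_mul (ne_of_gt hKpos) (ne_of_gt ht.1)]
    ring
  rw [hcongr]
  rw [integral_sub (integrable_const _) (log_integrableOn hcpos hc1)]
  rw [setIntegral_const, integral_log_Ioc hcpos hc1]
  rw [measureReal_def, Real.volume_Ioc, sub_zero, smul_eq_mul, ENNReal.toReal_ofReal (by positivity)]
  rw [Real.log_div one_ne_zero (ne_of_gt hKpos), Real.log_one]
  field_simp
  ring

lemma outer2 (k : ℕ) (hk : 2 ≤ k) :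
    ∫ t in Ioc (1/(k:ℝ)) 1, (((k:ℝ) - 1)/(k:ℝ) * ((k:ℝ) * (1 - t)/((k:ℝ) - 1)) ^ k)
      = ((k:ℝ) - 1)^2/((k:ℝ)^2 * ((k:ℝ) + 1)) := by
  have h2 : (2:ℝ) ≤ (k:ℝ) := by exact_mod_cast hk
  set K : ℝ := (k:ℝ) with hKdef
  have hKpos : (0:ℝ) < K := by linarith
  have hK1 : (0:ℝ) < K - 1 := by linarith
  have hc1 : 1/K ≤ 1 := by rw [div_le_one hKpos]; linarith
  set D : ℝ := (K - 1)/K * (K/(K - 1)) ^ k with hDdef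
  have hcongr : ∫ t in Ioc (1/K) 1, ((K - 1)/K * (K * (1 - t)/(K - 1)) ^ k)
      = ∫ t in Ioc (1/K) 1, (D * (1 - t) ^ k) := by
    apply setIntegral_congr_fun measurableSet_Ioc
    intro t _
    show (K - 1)/K * (K * (1 - t)/(K - 1)) ^ k = D * (1 - t) ^ k
    rw [hDdef, show K * (1 - t)/(K - 1) = (K/(K-1)) * (1 - t) by ring, mul_pow]
    ring
  rw [hcongr]
  have hint : ∫ t in Ioc (1/K) 1, (D * (1 - t) ^ k) = D * ∫ t in Ioc (1/K) 1, (1 - t) ^ k := by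
    rw [← integral_const_mul]
  rw [hint]
  have hpow : ∫ t in Ioc (1/K) 1, (1 - t) ^ k = ((K-1)/K) ^ (k+1) / ((k:ℝ)+1) := by
    rw [← intervalIntegral.integral_of_le hc1]
    have hftc := intervalIntegral.integral_eq_sub_of_hasDerivAt
      (f := fun t : ℝ => -((1 - t) ^ (k+1) / ((k:ℝ)+1))) (f' := fun t : ℝ => (1 - t) ^ k)
      (a := 1/K) (b := 1)
      (fun x _ => by
        have h := ((((hasDerivAt_id x).const_sub 1).pow (k+1)).div_const ((k:ℝ)+1)).neg
        have hfact : -(((k:ℕ) + 1 : ℕ) * (1 - id x) ^ (k + 1 - 1) * -1 / ((k:ℝ) + 1)) = (1 - x)^k := by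
          simp only [id_eq, Nat.add_sub_cancel]
          have hne : ((k:ℝ)) + 1 ≠ 0 := by positivity
          push_cast
          field_simp
        rw [hfact] at h
        simp only [id_eq] at h
        exact h)
      ((by continuity : Continuous fun t : ℝ => (1 - t) ^ k).intervalIntegrable _ _)
    rw [hftc]
    simp only [sub_self, zero_pow (by omega : k + 1 ≠ 0), neg_zero, zero_div, zero_sub, neg_neg]
    rw [show (1:ℝ) - 1/K = (K-1)/K from by field_simp]
  rw [hpow, hDdef]
  have hKK : (K/(K-1)) ^ k * ((K-1)/K) ^ (k+1) = (K-1)/K := by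
    rw [pow_succ, ← mul_assoc, ← mul_pow]
    have : K/(K-1) * ((K-1)/K) = 1 := by field_simp
    rw [this, one_pow, one_mul]
  have hre : (K-1)/K * (K/(K-1))^k * (((K-1)/K)^(k+1) / ((k:ℝ)+1))
      = (K-1)/K * ((K/(K-1))^k * ((K-1)/K)^(k+1)) / ((k:ℝ)+1) := by ring
  rw [hre, hKK]
  have hKk : ((k:ℝ)+1) = K + 1 := rfl
  rw [hKk]
  field_simp

/-- For `k ≥ 2`, every continuous `N : (0,1] × [0,∞) → [0,1]` satisfying the
column requirement `∫₀¹ (1 - N(x,t)) dx ≤ t` has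
`∫₀^∞ ∫₀¹ (1/x)·N(x,t)^k dx dt ≥ (3k-1)/(k(k+1))` (in `[0,∞]`). -/
theorem upper_bound_theta (k : ℕ) (hk : 2 ≤ k) (N : ℝ → ℝ → ℝ)
    (hcont : ContinuousOn (fun p : ℝ × ℝ => N p.1 p.2) (Ioc 0 1 ×ˢ Ici 0))
    (hrange : ∀ x ∈ Ioc (0:ℝ) 1, ∀ t ∈ Ici (0:ℝ), N x t ∈ Icc (0:ℝ) 1)
    (hcol : ∀ t ∈ Ici (0:ℝ), (∫ x in Ioc (0:ℝ) 1, (1 - N x t)) ≤ t) :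
    ENNReal.ofReal ((3 * (k:ℝ) - 1) / ((k:ℝ) * ((k:ℝ) + 1))) ≤
      ∫⁻ t in Ici (0:ℝ), ∫⁻ x in Ioc (0:ℝ) 1,
        ENNReal.ofReal ((1 / x) * N x t ^ k) := by
  have h2 : (2:ℝ) ≤ (k:ℝ) := by exact_mod_cast hk
  set K : ℝ := (k:ℝ) with hKdef
  have hKpos : (0:ℝ) < K := by linarith
  have hK1 : (0:ℝ) < K - 1 := by linarith
  have hcpos : (0:ℝ) < 1/K := by positivity
  have hc1 : 1/K ≤ 1 := by rw [div_le_one hKpos]; linarith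
  have hmeasN : ∀ t ∈ Ici (0:ℝ), AEMeasurable (fun x => N x t) (volume.restrict (Ioc 0 1)) := by
    intro t htt
    have hmap : MapsTo (fun x : ℝ => (x, t)) (Ioc 0 1) (Ioc 0 1 ×ˢ Ici 0) :=
      fun x hx => ⟨hx, htt⟩
    exact (hcont.comp (Continuous.continuousOn (continuous_id.prodMk continuous_const)) hmap).aemeasurable
      measurableSet_Ioc
  set F : ℝ → ENNReal := fun t => ∫⁻ x in Ioc (0:ℝ) 1, ENNReal.ofReal ((1 / x) * N x t ^ k)
    with hFdef
  -- lower bound on the first piece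
  have hI1 : ENNReal.ofReal ((K - 1)/K^2 + 1/K) ≤ ∫⁻ t in Ioc (0:ℝ) (1/K), F t := by
    have hint : IntegrableOn (fun t => (K - 1)/K - Real.log (K * t)) (Ioc 0 (1/K)) := by
      have hcong : EqOn (fun t => (K - 1)/K - Real.log (K * t))
          (fun t => ((K - 1)/K - Real.log K) - Real.log t) (Ioc 0 (1/K)) := by
        intro t ht
        show (K - 1)/K - Real.log (K * t) = ((K - 1)/K - Real.log K) - Real.log t
        rw [Real.log_mul (ne_of_gt hKpos) (ne_of_gt ht.1)]
        ring
      rw [integrableOn_congr_fun hcong measurableSet_Ioc]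
      exact (integrable_const _).sub (log_integrableOn hcpos hc1)
    have hnn : 0 ≤ᵐ[volume.restrict (Ioc (0:ℝ) (1/K))]
        (fun t => (K - 1)/K - Real.log (K * t)) := by
      filter_upwards [ae_restrict_mem measurableSet_Ioc] with t ht
      have hKt1 : K * t ≤ 1 := by
        calc K * t ≤ K * (1/K) := mul_le_mul_of_nonneg_left ht.2 hKpos.le
          _ = 1 := by field_simp
      have hlog : Real.log (K * t) ≤ 0 :=
        Real.log_nonpos (mul_nonneg hKpos.le ht.1.le) hKt1
      have : 0 ≤ (K - 1)/K := div_nonneg hK1.le hKpos.le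
      simp only [Pi.zero_apply]
      linarith
    calc ENNReal.ofReal ((K - 1)/K^2 + 1/K)
        = ENNReal.ofReal (∫ t in Ioc (0:ℝ) (1/K), ((K - 1)/K - Real.log (K * t))) := by
          rw [outer1 k hk]
      _ = ∫⁻ t in Ioc (0:ℝ) (1/K), ENNReal.ofReal ((K - 1)/K - Real.log (K * t)) :=
          ofReal_integral_eq_lintegral_ofReal hint hnn
      _ ≤ ∫⁻ t in Ioc (0:ℝ) (1/K), F t := by
          apply lintegral_mono_ae
          filter_upwards [ae_restrict_mem measurableSet_Ioc] with t ht
          have htIci : t ∈ Ici (0:ℝ) := le_of_lt ht.1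
          exact regime1 k hk N t (hmeasN t htIci) (fun x hx => hrange x hx t htIci)
            (hcol t htIci) ht
  -- lower bound on the second piece
  have hI2 : ENNReal.ofReal ((K - 1)^2/(K^2 * (K + 1))) ≤ ∫⁻ t in Ioc (1/K) 1, F t := by
    have hint : IntegrableOn (fun t => (K - 1)/K * (K * (1 - t)/(K - 1)) ^ k) (Ioc (1/K) 1) := by
      apply Continuous.integrableOn_Ioc
      continuity
    have hnn : 0 ≤ᵐ[volume.restrict (Ioc (1/K) 1)]
        (fun t => (K - 1)/K * (K * (1 - t)/(K - 1)) ^ k) := by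
      filter_upwards [ae_restrict_mem measurableSet_Ioc] with t ht
      simp only [Pi.zero_apply]
      apply mul_nonneg (by positivity)
      apply pow_nonneg
      apply div_nonneg _ hK1.le
      apply mul_nonneg hKpos.le
      linarith [ht.2]
    calc ENNReal.ofReal ((K - 1)^2/(K^2 * (K + 1)))
        = ENNReal.ofReal (∫ t in Ioc (1/K) 1, ((K - 1)/K * (K * (1 - t)/(K - 1)) ^ k)) := by
          rw [outer2 k hk]
      _ = ∫⁻ t in Ioc (1/K) 1, ENNReal.ofReal ((K - 1)/K * (K * (1 - t)/(K - 1)) ^ k) :=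
          ofReal_integral_eq_lintegral_ofReal hint hnn
      _ ≤ ∫⁻ t in Ioc (1/K) 1, F t := by
          apply lintegral_mono_ae
          filter_upwards [ae_restrict_mem measurableSet_Ioc] with t ht
          have htIci : t ∈ Ici (0:ℝ) := le_of_lt (lt_trans hcpos ht.1)
          exact regime2 k hk N t (hmeasN t htIci) (fun x hx => hrange x hx t htIci)
            (hcol t htIci) ht
  -- assemble
  have hsplit : ∫⁻ t in Ioc (0:ℝ) 1, F t
      = (∫⁻ t in Ioc (0:ℝ) (1/K), F t) + ∫⁻ t in Ioc (1/K) 1, F t := by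
    rw [← Ioc_union_Ioc_eq_Ioc hcpos.le hc1]
    exact lintegral_union measurableSet_Ioc (Ioc_disjoint_Ioc_of_le le_rfl)
  have hmono : ∫⁻ t in Ioc (0:ℝ) 1, F t ≤ ∫⁻ t in Ici (0:ℝ), F t :=
    lintegral_mono_set (fun t ht => le_of_lt ht.1)
  have hval : (3 * K - 1) / (K * (K + 1)) = ((K - 1)/K^2 + 1/K) + (K - 1)^2/(K^2 * (K + 1)) := by
    field_simp
    ring
  have hnn1 : (0:ℝ) ≤ (K - 1)/K^2 + 1/K := by positivity
  calc ENNReal.ofReal ((3 * K - 1) / (K * (K + 1)))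
      = ENNReal.ofReal ((K - 1)/K^2 + 1/K) + ENNReal.ofReal ((K - 1)^2/(K^2 * (K + 1))) := by
        rw [hval, ENNReal.ofReal_add hnn1 (by positivity)]
    _ ≤ (∫⁻ t in Ioc (0:ℝ) (1/K), F t) + ∫⁻ t in Ioc (1/K) 1, F t := add_le_add hI1 hI2
    _ = ∫⁻ t in Ioc (0:ℝ) 1, F t := hsplit.symm
    _ ≤ ∫⁻ t in Ici (0:ℝ), F t := hmono
end

section
/- Let k ≥ 2 be an integer. Then ∫₀^∞ ∫₀¹ (1/x)·OPT_k(x,t)^k dx dt = (3k−1)/(k(k+1)). -/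
open MeasureTheory Set
open scoped ENNReal

/-- The optimal function `OPT_k : (0,1] × [0,∞) → [0,1]`:
`OPT_k(x,t) = 1` if `t ≤ x/k`; `(x/(kt))^{1/(k-1)}` if `x/k ≤ t ≤ 1/k`;
`(k/(k-1))·(1-t)·x^{1/(k-1)}` if `1/k ≤ t ≤ 1`; and `0` if `t ≥ 1`.
(The branch values agree at the boundary points.) -/
noncomputable def OPTk (k : ℕ) (x t : ℝ) : ℝ :=
  if 1 ≤ t then 0
  else if 1 / (k:ℝ) ≤ t then ((k:ℝ) / ((k:ℝ) - 1)) * (1 - t) * x ^ ((1:ℝ) / ((k:ℝ) - 1))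
  else if x / (k:ℝ) ≤ t then (x / ((k:ℝ) * t)) ^ ((1:ℝ) / ((k:ℝ) - 1))
  else 1

/-- Auxiliary: a lintegral of `ofReal` over `Ioo` equals `ofReal` of an interval integral. -/
lemma lint_Ioo {a b : ℝ} (hab : a ≤ b) {h : ℝ → ℝ}
    (hint : IntervalIntegrable h volume a b) (hnn : ∀ t ∈ Set.Ioc a b, 0 ≤ h t) :
    ∫⁻ t in Ioo a b, ENNReal.ofReal (h t) = ENNReal.ofReal (∫ t in a..b, h t) := by
  rw [setLIntegral_congr Ioo_ae_eq_Ioc, intervalIntegral.integral_of_le hab,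
    ← ofReal_integral_eq_lintegral_ofReal
      ((intervalIntegrable_iff_integrableOn_Ioc_of_le hab).mp hint)
      ((ae_restrict_iff' measurableSet_Ioc).mpr (ae_of_all _ hnn))]

/-- Auxiliary: splitting `∫⁻` over `Ici 0` into four pieces. -/
lemma split4 {a₁ a₂ a₃ : ℝ} (h1 : 0 < a₁) (h2 : a₁ ≤ a₂) (h3 : a₂ ≤ a₃) (f : ℝ → ℝ≥0∞) :
    ∫⁻ t in Ici (0:ℝ), f t =
      (∫⁻ t in Ioo 0 a₁, f t) + (∫⁻ t in Ioo a₁ a₂, f t) + (∫⁻ t in Ioo a₂ a₃, f t)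
        + ∫⁻ t in Ioi a₃, f t := by
  have step : ∀ a b : ℝ, a ≤ b →
      ∫⁻ t in Ioi a, f t = (∫⁻ t in Ioo a b, f t) + ∫⁻ t in Ioi b, f t := by
    intro a b hab
    rw [← Ioc_union_Ioi_eq_Ioi hab, lintegral_union measurableSet_Ioi
      (Ioc_disjoint_Ioi le_rfl), setLIntegral_congr Ioo_ae_eq_Ioc]
  rw [← setLIntegral_congr Ioi_ae_eq_Ici, step 0 a₁ h1.le, step a₁ a₂ h2, step a₂ a₃ h3]
  ring

set_option maxHeartbeats 1000000 in
/-- For `k ≥ 2`,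
`∫₀^∞ ∫₀¹ (1/x)·OPT_k(x,t)^k dx dt = (3k-1)/(k(k+1))`. -/
theorem theta_OPT (k : ℕ) (hk : 2 ≤ k) :
    (∫⁻ t in Ici (0:ℝ), ∫⁻ x in Ioc (0:ℝ) 1,
        ENNReal.ofReal ((1 / x) * OPTk k x t ^ k)) =
      ENNReal.ofReal ((3 * (k:ℝ) - 1) / ((k:ℝ) * ((k:ℝ) + 1))) := by
  have hK : (2:ℝ) ≤ (k:ℝ) := by exact_mod_cast hk
  have hK0 : (0:ℝ) < (k:ℝ) := by linarith
  have hK1 : (0:ℝ) < (k:ℝ) - 1 := by linarith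
  set e : ℝ := 1 / ((k:ℝ) - 1) with he_def
  have he : 0 < e := by positivity
  have heK : e * (k:ℝ) = e + 1 := by
    rw [he_def]; field_simp; ring
  -- Tonelli: swap the two integrals
  have hopt : Measurable fun z : ℝ × ℝ => OPTk k z.2 z.1 := by
    unfold OPTk
    refine Measurable.ite (measurableSet_le measurable_const measurable_fst)
      measurable_const ?_
    refine Measurable.ite (measurableSet_le measurable_const measurable_fst) (by fun_prop) ?_
    refine Measurable.ite
      (measurableSet_le (measurable_snd.div measurable_const) measurable_fst)
      (by fun_prop) measurable_const
  have hmeas : Measurable (Function.uncurry fun t x : ℝ =>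
      ENNReal.ofReal ((1 / x) * OPTk k x t ^ k)) :=
    ENNReal.measurable_ofReal.comp
      ((measurable_const.div measurable_snd).mul (hopt.pow_const k))
  rw [lintegral_lintegral_swap hmeas.aemeasurable]
  -- evaluate the inner integral over t
  have hinner : ∀ x ∈ Ioc (0:ℝ) 1,
      (∫⁻ t in Ici (0:ℝ), ENNReal.ofReal ((1 / x) * OPTk k x t ^ k)) =
      ENNReal.ofReal (1/(k:ℝ) + (((k:ℝ)-1)/(k:ℝ)) * (1 - x ^ e)
        + (((k:ℝ)-1)/((k:ℝ)*((k:ℝ)+1))) * x ^ e) := by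
    intro x hx
    obtain ⟨hx0, hx1⟩ := hx
    have hxK : 0 < x / (k:ℝ) := by positivity
    have hab : x / (k:ℝ) ≤ 1 / (k:ℝ) := by gcongr
    have hb1 : 1 / (k:ℝ) ≤ 1 := by
      rw [div_le_one hK0]; linarith
    have hxe1 : x ^ e ≤ 1 := Real.rpow_le_one hx0.le hx1 he.le
    rw [split4 hxK hab hb1]
    -- piece 1 : constant 1/x on (0, x/k)
    have p1 : ∫⁻ t in Ioo 0 (x/(k:ℝ)), ENNReal.ofReal ((1 / x) * OPTk k x t ^ k)
        = ENNReal.ofReal (1/(k:ℝ)) := by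
      have hpt : ∀ t ∈ Ioo (0:ℝ) (x/(k:ℝ)),
          ENNReal.ofReal ((1 / x) * OPTk k x t ^ k) = ENNReal.ofReal (1/x) := by
        intro t ht
        obtain ⟨ht0, htx⟩ := ht
        have h3 : ¬ (x / (k:ℝ) ≤ t) := not_le.mpr htx
        have h2 : ¬ (1 / (k:ℝ) ≤ t) := not_le.mpr (lt_of_lt_of_le htx hab)
        have h1 : ¬ ((1:ℝ) ≤ t) := not_le.mpr (lt_of_lt_of_le (lt_of_lt_of_le htx hab) hb1)
        rw [OPTk, if_neg h1, if_neg h2, if_neg h3, one_pow, mul_one]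
      rw [setLIntegral_congr_fun measurableSet_Ioo hpt,
        setLIntegral_const, Real.volume_Ioo, sub_zero,
        ← ENNReal.ofReal_mul (by positivity),
        show (1/x) * (x/(k:ℝ)) = 1/(k:ℝ) by field_simp]
    -- piece 2 : the middle power branch on (x/k, 1/k)
    have p2 : ∫⁻ t in Ioo (x/(k:ℝ)) (1/(k:ℝ)), ENNReal.ofReal ((1 / x) * OPTk k x t ^ k)
        = ENNReal.ofReal ((((k:ℝ)-1)/(k:ℝ)) * (1 - x ^ e)) := by
      have hKq : (0:ℝ) < (k:ℝ) ^ (e * (k:ℝ)) := Real.rpow_pos_of_pos hK0 _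
      have hpt : ∀ t ∈ Ioo (x/(k:ℝ)) (1/(k:ℝ)),
          ENNReal.ofReal ((1 / x) * OPTk k x t ^ k)
            = ENNReal.ofReal ((x ^ e / (k:ℝ) ^ (e * (k:ℝ))) * t ^ (-(e * (k:ℝ)))) := by
        intro t ht
        obtain ⟨hta, htb⟩ := ht
        have ht0 : 0 < t := lt_trans hxK hta
        have h1 : ¬ ((1:ℝ) ≤ t) := not_le.mpr (lt_of_lt_of_le htb hb1)
        have h2 : ¬ (1 / (k:ℝ) ≤ t) := not_le.mpr htb
        have h3 : x / (k:ℝ) ≤ t := hta.le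
        rw [OPTk, if_neg h1, if_neg h2, if_pos h3]
        congr 1
        rw [← Real.rpow_natCast ((x / ((k:ℝ) * t)) ^ e) k, ← Real.rpow_mul (by positivity),
          Real.div_rpow hx0.le (by positivity), Real.mul_rpow hK0.le ht0.le,
          Real.rpow_neg ht0.le, heK, Real.rpow_add hx0, Real.rpow_one]
        have hKq' : ((k:ℝ)) ^ (e + 1) ≠ 0 := by
          have := Real.rpow_pos_of_pos hK0 (e + 1); linarith
        have htq : (t:ℝ) ^ (e + 1) ≠ 0 := by
          have := Real.rpow_pos_of_pos ht0 (e + 1); linarith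
        field_simp
      rw [setLIntegral_congr_fun measurableSet_Ioo hpt]
      have hint : IntervalIntegrable
          (fun t => (x ^ e / (k:ℝ) ^ (e * (k:ℝ))) * t ^ (-(e * (k:ℝ)))) volume
          (x/(k:ℝ)) (1/(k:ℝ)) :=
        (intervalIntegral.intervalIntegrable_rpow (Or.inr (notMem_uIcc_of_lt hxK (by positivity)))).const_mul _
      have hnn : ∀ t ∈ Ioc (x/(k:ℝ)) (1/(k:ℝ)),
          0 ≤ (x ^ e / (k:ℝ) ^ (e * (k:ℝ))) * t ^ (-(e * (k:ℝ))) := by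
        intro t ht
        have ht0 : 0 < t := lt_trans hxK ht.1
        positivity
      rw [lint_Ioo hab hint hnn, intervalIntegral.integral_const_mul,
        integral_rpow (Or.inr ⟨by rw [heK]; intro hcon; nlinarith,
          notMem_uIcc_of_lt hxK (by positivity)⟩)]
      congr 1
      have hexp : -(e * (k:ℝ)) + 1 = -e := by rw [heK]; ring
      rw [hexp, heK]
      have h1 : ((1:ℝ)/(k:ℝ)) ^ (-e) = (k:ℝ) ^ e := by
        rw [one_div, Real.inv_rpow hK0.le, Real.rpow_neg hK0.le, inv_inv]
      have h2 : (x/(k:ℝ)) ^ (-e) = x ^ (-e) * (k:ℝ) ^ e := by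
        rw [Real.div_rpow hx0.le hK0.le, Real.rpow_neg hK0.le e, div_inv_eq_mul]
      have h3 : (k:ℝ) ^ (e + 1) = (k:ℝ) ^ e * (k:ℝ) := by
        rw [Real.rpow_add hK0, Real.rpow_one]
      have h4 : x ^ e * x ^ (-e) = 1 := by
        rw [← Real.rpow_add hx0]; simp
      rw [h1, h2, h3]
      have hKe : (0:ℝ) < (k:ℝ) ^ e := Real.rpow_pos_of_pos hK0 _
      have hxme : (0:ℝ) < x ^ (-e) := Real.rpow_pos_of_pos hx0 _
      have heinv : e * ((k:ℝ) - 1) = 1 := by rw [he_def]; field_simp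
      field_simp
      linear_combination h4 - (1 - x ^ e) * heinv
    -- piece 3 : the branch on (1/k, 1)
    have p3 : ∫⁻ t in Ioo (1/(k:ℝ)) 1, ENNReal.ofReal ((1 / x) * OPTk k x t ^ k)
        = ENNReal.ofReal ((((k:ℝ)-1)/((k:ℝ)*((k:ℝ)+1))) * x ^ e) := by
      have hpt : ∀ t ∈ Ioo (1/(k:ℝ)) 1,
          ENNReal.ofReal ((1 / x) * OPTk k x t ^ k)
            = ENNReal.ofReal ((((k:ℝ)/((k:ℝ)-1))^k * x ^ e) * (1-t)^k) := by
        intro t ht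
        obtain ⟨hta, htb⟩ := ht
        have h1 : ¬ ((1:ℝ) ≤ t) := not_le.mpr htb
        have h2 : 1 / (k:ℝ) ≤ t := hta.le
        rw [OPTk, if_neg h1, if_pos h2]
        congr 1
        rw [mul_pow, mul_pow, ← Real.rpow_natCast (x ^ e) k, ← Real.rpow_mul hx0.le,
          heK, Real.rpow_add hx0, Real.rpow_one]
        field_simp
      rw [setLIntegral_congr_fun measurableSet_Ioo hpt]
      have hint : IntervalIntegrable
          (fun t => (((k:ℝ)/((k:ℝ)-1))^k * x ^ e) * (1-t)^k) volume (1/(k:ℝ)) 1 :=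
        Continuous.intervalIntegrable (by continuity) _ _
      have hnn : ∀ t ∈ Ioc (1/(k:ℝ)) 1,
          0 ≤ (((k:ℝ)/((k:ℝ)-1))^k * x ^ e) * (1-t)^k := by
        intro t ht
        have : 0 ≤ 1 - t := by linarith [ht.2]
        positivity
      rw [lint_Ioo hb1 hint hnn, intervalIntegral.integral_const_mul]
      have hcomp : ∫ t in (1/(k:ℝ))..1, (1-t)^k = ∫ s in (0:ℝ)..(1 - 1/(k:ℝ)), s^k := by
        have := intervalIntegral.integral_comp_sub_left (a := 1/(k:ℝ)) (b := 1)
          (fun s => s ^ k) 1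
        simpa using this
      rw [hcomp, integral_pow]
      congr 1
      have h1K : 1 - 1/(k:ℝ) = ((k:ℝ)-1)/(k:ℝ) := by field_simp
      rw [h1K, zero_pow (by omega), sub_zero, pow_succ]
      have hone : ((k:ℝ)/((k:ℝ)-1))^k * (((k:ℝ)-1)/(k:ℝ))^k = 1 := by
        rw [← mul_pow, show ((k:ℝ)/((k:ℝ)-1)) * (((k:ℝ)-1)/(k:ℝ)) = 1 by field_simp, one_pow]
      rw [show ((k:ℝ)/((k:ℝ)-1))^k * x ^ e * ((((k:ℝ)-1)/(k:ℝ))^k * (((k:ℝ)-1)/(k:ℝ)) / ((k:ℝ)+1))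
          = (((k:ℝ)/((k:ℝ)-1))^k * (((k:ℝ)-1)/(k:ℝ))^k) * (x ^ e * ((((k:ℝ)-1)/(k:ℝ)) / ((k:ℝ)+1)))
          by ring, hone, one_mul]
      field_simp
    -- piece 4 : zero for t > 1
    have p4 : ∫⁻ t in Ioi (1:ℝ), ENNReal.ofReal ((1 / x) * OPTk k x t ^ k) = 0 := by
      have hpt : ∀ t ∈ Ioi (1:ℝ),
          ENNReal.ofReal ((1 / x) * OPTk k x t ^ k) = 0 := by
        intro t ht
        rw [OPTk, if_pos (le_of_lt ht), zero_pow (by omega), mul_zero, ENNReal.ofReal_zero]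
      rw [setLIntegral_congr_fun measurableSet_Ioi hpt, lintegral_zero]
    have ht2 : 0 ≤ ((k:ℝ)-1)/(k:ℝ) * (1 - x ^ e) :=
      mul_nonneg (by positivity) (by linarith)
    have ht3 : 0 ≤ ((k:ℝ)-1)/((k:ℝ)*((k:ℝ)+1)) * x ^ e :=
      mul_nonneg (by positivity) (Real.rpow_nonneg hx0.le e)
    rw [p1, p2, p3, p4, add_zero, ← ENNReal.ofReal_add (by positivity) ht2,
      ← ENNReal.ofReal_add (add_nonneg (by positivity) ht2) ht3]
  -- now the outer integral
  rw [setLIntegral_congr_fun measurableSet_Ioc hinner,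
    ← setLIntegral_congr Ioo_ae_eq_Ioc]
  have hi : IntervalIntegrable (fun x : ℝ => x ^ e) volume 0 1 :=
    intervalIntegral.intervalIntegrable_rpow' (by linarith)
  have hint : IntervalIntegrable (fun x : ℝ => 1/(k:ℝ) + (((k:ℝ)-1)/(k:ℝ)) * (1 - x ^ e)
      + (((k:ℝ)-1)/((k:ℝ)*((k:ℝ)+1))) * x ^ e) volume 0 1 :=
    (intervalIntegrable_const.add ((intervalIntegrable_const.sub hi).const_mul _)).add
      (hi.const_mul _)
  have hnn : ∀ x ∈ Ioc (0:ℝ) 1,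
      0 ≤ 1/(k:ℝ) + (((k:ℝ)-1)/(k:ℝ)) * (1 - x ^ e)
        + (((k:ℝ)-1)/((k:ℝ)*((k:ℝ)+1))) * x ^ e := by
    intro x hx
    have hxe1 : x ^ e ≤ 1 := Real.rpow_le_one hx.1.le hx.2 he.le
    have hxe0 : 0 ≤ x ^ e := Real.rpow_nonneg hx.1.le e
    have : 0 ≤ (((k:ℝ)-1)/(k:ℝ)) * (1 - x ^ e) := by
      apply mul_nonneg (by positivity); linarith
    have h3' : 0 ≤ ((k:ℝ)-1)/((k:ℝ)*((k:ℝ)+1)) * x ^ e := mul_nonneg (by positivity) hxe0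
    have h1' : (0:ℝ) < 1/(k:ℝ) := by positivity
    linarith
  rw [lint_Ioo zero_le_one hint hnn]
  congr 1
  have hxint : ∫ x in (0:ℝ)..1, x ^ e = 1/(e+1) := by
    rw [integral_rpow (Or.inl (by linarith))]
    rw [Real.one_rpow, Real.zero_rpow (by positivity), sub_zero]
  rw [intervalIntegral.integral_add (intervalIntegrable_const.add
      ((intervalIntegrable_const.sub hi).const_mul _)) (hi.const_mul _),
    intervalIntegral.integral_add intervalIntegrable_const
      ((intervalIntegrable_const.sub hi).const_mul _),
    intervalIntegral.integral_const_mul, intervalIntegral.integral_const_mul,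
    intervalIntegral.integral_sub intervalIntegrable_const hi,
    intervalIntegral.integral_const, hxint]
  have he1 : 1/(e+1) = ((k:ℝ)-1)/(k:ℝ) := by
    rw [he_def]; field_simp; ring
  rw [he1]
  simp only [smul_eq_mul, mul_one, sub_zero, intervalIntegral.integral_const]
  field_simp
  ring
end

section
/- Let k ≥ 2 be an integer. For every t ≥ 0, the column integral of OPT_k satisfies ∫₀¹ (1 − OPT_k(x,t)) dx = min(t, 1); in particular OPT_k satisfies the column requirement ∫₀¹ (1 − OPT_k(x,t)) dx ≤ t for all t ≥ 0. -/
open MeasureTheory Set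

private lemma rpow_cont (p : ℝ) (hp : 0 ≤ p) : Continuous fun x : ℝ => x ^ p := by
  rw [continuous_iff_continuousAt]
  intro x
  exact Real.continuousAt_rpow_const x p (Or.inr hp)

/-- For `k ≥ 2` and every `t ≥ 0`, the column integral of `OPT_k` satisfies
`∫₀¹ (1 - OPT_k(x,t)) dx = min(t,1)`; in particular `OPT_k` satisfies the column
requirement `∫₀¹ (1 - OPT_k(x,t)) dx ≤ t`. -/
theorem column_OPT (k : ℕ) (hk : 2 ≤ k) (t : ℝ) (ht : 0 ≤ t) :
    (∫ x in Ioc (0:ℝ) 1, (1 - OPTk k x t)) = min t 1 ∧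
    (∫ x in Ioc (0:ℝ) 1, (1 - OPTk k x t)) ≤ t := by
  have hk2 : (2:ℝ) ≤ (k:ℝ) := by exact_mod_cast hk
  have hk1 : (1:ℝ) ≤ (k:ℝ) - 1 := by linarith
  have hkpos : (0:ℝ) < (k:ℝ) := by linarith
  set p : ℝ := 1 / ((k:ℝ) - 1) with hpdef
  have hp : 0 < p := by positivity
  have hp1 : p + 1 = (k:ℝ) / ((k:ℝ) - 1) := by
    rw [hpdef]; field_simp; ring
  have hp1pos : (0:ℝ) < p + 1 := by linarith
  have hcont : Continuous fun x : ℝ => x ^ p := rpow_cont p hp.le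
  have key : (∫ x in Ioc (0:ℝ) 1, (1 - OPTk k x t)) = min t 1 := by
    rcases le_or_gt 1 t with h1 | h1
    · -- t ≥ 1
      have heq : EqOn (fun x => 1 - OPTk k x t) (fun _ => (1:ℝ)) (Ioc (0:ℝ) 1) := by
        intro x hx; simp [OPTk, h1]
      rw [setIntegral_congr_fun measurableSet_Ioc heq]
      simp [Real.volume_Ioc, min_eq_right h1]
    · have hmin : min t 1 = t := min_eq_left h1.le
      rcases le_or_gt (1/(k:ℝ)) t with h2 | h2
      · -- 1/k ≤ t < 1
        have heq : EqOn (fun x => 1 - OPTk k x t)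
            (fun x => 1 - ((k:ℝ)/((k:ℝ)-1)) * (1-t) * x ^ p) (Ioc (0:ℝ) 1) := by
          intro x hx
          simp only [OPTk]
          rw [if_neg (not_le.mpr h1), if_pos h2, ← hpdef]
        rw [setIntegral_congr_fun measurableSet_Ioc heq,
          ← intervalIntegral.integral_of_le (by norm_num : (0:ℝ) ≤ 1)]
        have hint : ∫ x in (0:ℝ)..1, x ^ p = 1 / (p+1) := by
          rw [integral_rpow (Or.inl (by linarith : (-1:ℝ) < p)),
            Real.one_rpow, Real.zero_rpow (by linarith)]
          ring
        rw [intervalIntegral.integral_sub (g := fun x => (k:ℝ)/((k:ℝ)-1) * (1-t) * x ^ p) (intervalIntegrable_const)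
          ((continuous_const.mul hcont).intervalIntegrable _ _),
          intervalIntegral.integral_const_mul, hint, hmin]
        have hkne : (k:ℝ) ≠ 0 := ne_of_gt hkpos
        have hk1ne : (k:ℝ) - 1 ≠ 0 := by linarith
        have hval : (k:ℝ)/((k:ℝ)-1) * (1-t) * (1/(p+1)) = 1 - t := by
          rw [hp1]; field_simp; try ring
        simp only [smul_eq_mul, intervalIntegral.integral_const, sub_zero, mul_one]
        linarith [hval]
      · -- 0 ≤ t < 1/k
        rcases eq_or_lt_of_le ht with h0 | h0
        · -- t = 0
          have heq : EqOn (fun x => 1 - OPTk k x t) (fun _ => (0:ℝ)) (Ioc (0:ℝ) 1) := by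
            intro x hx
            have hx0 : 0 < x := hx.1
            have hno : ¬ (x / (k:ℝ) ≤ t) := by
              rw [← h0]; push_neg; positivity
            simp only [OPTk]
            rw [if_neg (not_le.mpr h1), if_neg (not_le.mpr h2), if_neg hno]
            ring
          rw [setIntegral_congr_fun measurableSet_Ioc heq, integral_zero, hmin, ← h0]
        · -- 0 < t < 1/k
          set c : ℝ := (k:ℝ) * t with hcdef
          have hcpos : 0 < c := by positivity
          have hc1 : c < 1 := by
            have := (lt_div_iff₀ hkpos).mp h2
            nlinarith
          have hsplit : Ioc (0:ℝ) 1 = Ioc 0 c ∪ Ioc c 1 :=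
            (Ioc_union_Ioc_eq_Ioc hcpos.le hc1.le).symm
          have heq1 : EqOn (fun x => 1 - OPTk k x t)
              (fun x => 1 - x ^ p / c ^ p) (Ioc (0:ℝ) c) := by
            intro x hx
            have hx0 : 0 < x := hx.1
            have hle : x / (k:ℝ) ≤ t := by
              rw [div_le_iff₀ hkpos]
              calc x ≤ c := hx.2
              _ = t * k := by rw [hcdef]; ring
            simp only [OPTk]
            rw [if_neg (not_le.mpr h1), if_neg (not_le.mpr h2), if_pos hle, ← hpdef,
              ← hcdef, Real.div_rpow hx0.le hcpos.le]
          have heq2 : EqOn (fun x => 1 - OPTk k x t)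
              (fun _ => (0:ℝ)) (Ioc c 1) := by
            intro x hx
            have hno : ¬ (x / (k:ℝ) ≤ t) := by
              rw [div_le_iff₀ hkpos]
              push_neg
              calc t * k = c := by rw [hcdef]; ring
              _ < x := hx.1
            simp only [OPTk]
            rw [if_neg (not_le.mpr h1), if_neg (not_le.mpr h2), if_neg hno]
            ring
          have hgcont : Continuous fun x : ℝ => 1 - x ^ p / c ^ p :=
            continuous_const.sub (hcont.div_const _)
          have hint1 : IntegrableOn (fun x => 1 - OPTk k x t) (Ioc (0:ℝ) c) :=
            (hgcont.integrableOn_Ioc).congr_fun heq1.symm measurableSet_Ioc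
          have hint2 : IntegrableOn (fun x => 1 - OPTk k x t) (Ioc c 1) :=
            (integrableOn_const measure_Ioc_lt_top.ne).congr_fun
              heq2.symm measurableSet_Ioc
          rw [hsplit, setIntegral_union (Ioc_disjoint_Ioc_of_le le_rfl) measurableSet_Ioc hint1 hint2,
            setIntegral_congr_fun measurableSet_Ioc heq1,
            setIntegral_congr_fun measurableSet_Ioc heq2]
          simp only [integral_zero, add_zero]
          rw [← intervalIntegral.integral_of_le hcpos.le]
          have hxp : ∫ x in (0:ℝ)..c, x ^ p = c ^ (p+1) / (p+1) := by
            rw [integral_rpow (Or.inl (by linarith : (-1:ℝ) < p)),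
              Real.zero_rpow (by linarith)]
            ring
          rw [intervalIntegral.integral_sub intervalIntegrable_const
            ((hcont.intervalIntegrable _ _).div_const _),
            intervalIntegral.integral_div, hxp, hmin]
          have hcp : c ^ (p+1) = c ^ p * c := by
            rw [Real.rpow_add hcpos, Real.rpow_one]
          have hcpne : c ^ p ≠ 0 := ne_of_gt (Real.rpow_pos_of_pos hcpos p)
          have hkne : (k:ℝ) ≠ 0 := ne_of_gt hkpos
          have hk1ne : (k:ℝ) - 1 ≠ 0 := by linarith
          rw [hcp]
          have hval : c ^ p * c / (p+1) / c ^ p = c / (p+1) := by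
            field_simp; try ring
          simp only [smul_eq_mul, intervalIntegral.integral_const, sub_zero, mul_one]
          rw [hval, hp1, hcdef]
          field_simp
          ring
  exact ⟨key, key.trans_le (min_le_left t 1)⟩
end

section
/- Fix real numbers 0 ≤ ε < 1 and T ≥ 0, and an integer k ≥ 2, and let a : [ε,1] → (0,∞) be continuous. Then there exists α ≥ 0 such that the function g(x) = min(1, α·a(x)^{−1/(k−1)}) satisfies ∫_ε^1 (1 − g(x)) dx ≤ T, and for every continuous f : [ε,1] → [0,1] with ∫_ε^1 (1 − f(x)) dx ≤ T one has ∫_ε^1 a(x)·g(x)^k dx ≤ ∫_ε^1 a(x)·f(x)^k dx. -/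
open MeasureTheory Set

open Finset in
private lemma pow_conv_aux (k : ℕ) {x y : ℝ} (hx : 0 ≤ x) (hy : 0 ≤ y) :
    (k:ℝ) * x ^ (k-1) * (y - x) ≤ y ^ k - x ^ k := by
  have hconst : ∀ {u : ℝ}, ∀ i ∈ range k, u ^ i * u ^ (k-1-i) = u ^ (k-1) := by
    intro u i hi
    rw [← pow_add]
    congr 1
    have := mem_range.mp hi
    omega
  rcases le_total x y with h | h
  · rw [← geom_sum₂_mul y x k]
    apply mul_le_mul_of_nonneg_right _ (by linarith)
    calc (k:ℝ) * x ^ (k-1) = ∑ i ∈ range k, x ^ i * x ^ (k-1-i) := by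
          rw [Finset.sum_congr rfl hconst]; simp [mul_comm]
      _ ≤ ∑ i ∈ range k, y ^ i * x ^ (k-1-i) := by
          apply Finset.sum_le_sum
          intro i _
          exact mul_le_mul_of_nonneg_right (pow_le_pow_left₀ hx h i) (pow_nonneg hx _)
  · have hfac := geom_sum₂_mul x y k
    have hS : (∑ i ∈ range k, x ^ i * y ^ (k-1-i)) ≤ (k:ℝ) * x ^ (k-1) := by
      calc (∑ i ∈ range k, x ^ i * y ^ (k-1-i)) ≤ ∑ i ∈ range k, x ^ i * x ^ (k-1-i) := by
            apply Finset.sum_le_sum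
            intro i _
            exact mul_le_mul_of_nonneg_left (pow_le_pow_left₀ hy h _) (pow_nonneg hx _)
        _ = (k:ℝ) * x ^ (k-1) := by rw [Finset.sum_congr rfl hconst]; simp [mul_comm]
    nlinarith [mul_le_mul_of_nonneg_right hS (by linarith : (0:ℝ) ≤ x - y)]

private lemma rpow_conv_aux (k : ℕ) (hk : 2 ≤ k) {A : ℝ} (hA : 0 < A) :
    (A ^ (-(1:ℝ) / ((k:ℝ) - 1))) ^ (k-1) = A⁻¹ := by
  have hk1 : ((k:ℝ) - 1) = ((k-1 : ℕ) : ℝ) := by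
    have : (1:ℕ) ≤ k := by omega
    push_cast [Nat.cast_sub this]; ring
  rw [← Real.rpow_natCast (A ^ (-(1:ℝ) / ((k:ℝ) - 1))) (k-1), ← Real.rpow_mul hA.le]
  have hne : ((k:ℝ) - 1) ≠ 0 := by
    have : (2:ℝ) ≤ k := by exact_mod_cast hk
    linarith
  rw [← hk1, div_mul_cancel₀ _ hne]
  exact Real.rpow_neg_one A

/-- minimization lemma on a closed interval: For `0 ≤ ε < 1`, `T ≥ 0`,
`k ≥ 2`, and a continuous positive weight `a : [ε,1] → (0,∞)`, there is an `α ≥ 0` such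
that `g(x) = min(1, α·a(x)^{-1/(k-1)})` satisfies `∫_ε^1 (1 - g) ≤ T` and minimizes
`∫_ε^1 a·f^k` among all continuous `f : [ε,1] → [0,1]` with `∫_ε^1 (1 - f) ≤ T`. -/
theorem min_lemma_closed (ε : ℝ) (hε : 0 ≤ ε) (hε1 : ε < 1) (T : ℝ) (hT : 0 ≤ T)
    (k : ℕ) (hk : 2 ≤ k) (a : ℝ → ℝ)
    (hacont : ContinuousOn a (Icc ε 1)) (hapos : ∀ x ∈ Icc ε 1, 0 < a x) :
    ∃ α : ℝ, 0 ≤ α ∧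
      (∫ x in Icc ε 1, (1 - min 1 (α * a x ^ (-(1:ℝ) / ((k:ℝ) - 1))))) ≤ T ∧
      ∀ f : ℝ → ℝ, ContinuousOn f (Icc ε 1) →
        (∀ x ∈ Icc ε 1, f x ∈ Icc (0:ℝ) 1) →
        (∫ x in Icc ε 1, (1 - f x)) ≤ T →
        (∫ x in Icc ε 1, a x * (min 1 (α * a x ^ (-(1:ℝ) / ((k:ℝ) - 1)))) ^ k) ≤
          ∫ x in Icc ε 1, a x * f x ^ k := by
  set p : ℝ := -(1:ℝ) / ((k:ℝ) - 1) with hp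
  set c : ℝ → ℝ := fun x => a x ^ p with hc
  have hccont : ContinuousOn c (Icc ε 1) :=
    hacont.rpow_const (fun x hx => Or.inl (hapos x hx).ne')
  have hcpos : ∀ x ∈ Icc ε 1, 0 < c x := fun x hx => Real.rpow_pos_of_pos (hapos x hx) p
  have hIne : (Icc ε 1).Nonempty := nonempty_Icc.mpr (by linarith)
  obtain ⟨x₀, hx₀, hminOn⟩ := isCompact_Icc.exists_isMinOn hIne hccont
  have hmin : ∀ x ∈ Icc ε 1, c x₀ ≤ c x := fun x hx => hminOn hx
  set M : ℝ := (c x₀)⁻¹ with hM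
  have hMpos : 0 < M := inv_pos.mpr (hcpos x₀ hx₀)
  -- the parametric integral
  set Φ : ℝ → ℝ := fun α => ∫ x in Icc ε 1, (1 - min 1 (α * c x)) with hΦdef
  -- continuity of Φ on [0, M]
  have hΦcont : ContinuousOn Φ (Icc 0 M) := by
    apply continuousOn_of_dominated (bound := fun _ => (1:ℝ))
    · intro α hα
      apply ContinuousOn.aestronglyMeasurable _ measurableSet_Icc
      exact continuousOn_const.sub
        ((continuous_const.min continuous_id).comp_continuousOn (continuousOn_const.mul hccont))
    · intro α hα
      refine (ae_restrict_iff' measurableSet_Icc).mpr (ae_of_all _ ?_)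
      intro x hx
      have h1 : 0 ≤ α * c x := mul_nonneg hα.1 (hcpos x hx).le
      have h2 : min 1 (α * c x) ≤ 1 := min_le_left _ _
      have h3 : 0 ≤ min 1 (α * c x) := le_min zero_le_one h1
      rw [Real.norm_eq_abs, abs_le]
      constructor <;> linarith
    · rw [← IntegrableOn]
      exact integrableOn_const measure_Icc_lt_top.ne
    · refine ae_of_all _ (fun x => ?_)
      exact (continuous_const.sub (continuous_const.min (continuous_id.mul continuous_const))).continuousOn
  have hvol : (volume (Icc ε 1)).toReal = 1 - ε := by
    rw [Real.volume_Icc, ENNReal.toReal_ofReal (by linarith)]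
  have hΦ0 : Φ 0 = 1 - ε := by
    have : ∀ x : ℝ, (1:ℝ) - min 1 ((0:ℝ) * c x) = 1 := by intro x; norm_num
    simp only [hΦdef, this, setIntegral_const, smul_eq_mul, mul_one, measureReal_def, hvol]
  have hΦM : Φ M = 0 := by
    have heq0 : ∀ x ∈ Icc ε 1, (1:ℝ) - min 1 (M * c x) = (fun _ => (0:ℝ)) x := by
      intro x hx
      have h0 := hcpos x₀ hx₀
      have h1 : (1:ℝ) ≤ M * c x := by
        calc (1:ℝ) = (c x₀)⁻¹ * c x₀ := (inv_mul_cancel₀ h0.ne').symm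
          _ ≤ (c x₀)⁻¹ * c x := mul_le_mul_of_nonneg_left (hmin x hx) (inv_nonneg.mpr h0.le)
      simp [min_eq_left h1]
    calc Φ M = ∫ x in Icc ε 1, (fun _ => (0:ℝ)) x :=
          setIntegral_congr_fun measurableSet_Icc heq0
      _ = 0 := by simp
  -- IVT: find α with Φ α = min T (1 - ε)
  set T' : ℝ := min T (1 - ε) with hT'
  have hT'mem : T' ∈ Icc (Φ M) (Φ 0) := by
    rw [hΦ0, hΦM]
    exact ⟨le_min hT (by linarith), min_le_right _ _⟩
  obtain ⟨α, hαmem, hΦα⟩ := intermediate_value_Icc' hMpos.le hΦcont hT'mem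
  have hα0 : 0 ≤ α := hαmem.1
  refine ⟨α, hα0, ?_, ?_⟩
  · show Φ α ≤ T
    calc Φ α = T' := hΦα
      _ ≤ T := min_le_left _ _
  · intro f hfcont hf01 hfT
    set g : ℝ → ℝ := fun x => min 1 (α * c x) with hg
    show (∫ x in Icc ε 1, a x * (g x) ^ k) ≤ ∫ x in Icc ε 1, a x * f x ^ k
    have hgcont : ContinuousOn g (Icc ε 1) :=
      (continuous_const.min continuous_id).comp_continuousOn (continuousOn_const.mul hccont)
    have hg01 : ∀ x ∈ Icc ε 1, g x ∈ Icc (0:ℝ) 1 := by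
      intro x hx
      exact ⟨le_min zero_le_one (mul_nonneg hα0 (hcpos x hx).le), min_le_left _ _⟩
    -- integrability
    have hint_f1 : IntegrableOn (fun x => 1 - f x) (Icc ε 1) :=
      (continuousOn_const.sub hfcont).integrableOn_Icc
    have hint_g1 : IntegrableOn (fun x => 1 - g x) (Icc ε 1) :=
      (continuousOn_const.sub hgcont).integrableOn_Icc
    have hint_afk : IntegrableOn (fun x => a x * f x ^ k) (Icc ε 1) :=
      (hacont.mul (hfcont.pow k)).integrableOn_Icc
    have hint_agk : IntegrableOn (fun x => a x * g x ^ k) (Icc ε 1) :=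
      (hacont.mul (hgcont.pow k)).integrableOn_Icc
    have hint_fg : IntegrableOn (fun x => (k:ℝ) * α ^ (k-1) * (f x - g x)) (Icc ε 1) :=
      (continuousOn_const.mul (hfcont.sub hgcont)).integrableOn_Icc
    -- pointwise inequality
    have key : ∀ x ∈ Icc ε 1, (k:ℝ) * α ^ (k-1) * (f x - g x) ≤
        a x * f x ^ k - a x * g x ^ k := by
      intro x hx
      have hA := hapos x hx
      have hg0 := (hg01 x hx).1
      have hg1 := (hg01 x hx).2
      have hf0 := (hf01 x hx).1
      have hf1 := (hf01 x hx).2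
      have hconv := pow_conv_aux k hg0 hf0
      have hstep1 : a x * ((k:ℝ) * g x ^ (k-1) * (f x - g x)) ≤
          a x * (f x ^ k - g x ^ k) := mul_le_mul_of_nonneg_left hconv hA.le
      have hrpow := rpow_conv_aux k hk hA
      rcases le_or_gt 1 (α * c x) with h1 | h1
      · -- g x = 1, and α^(k-1) ≤ a x
        have hgx : g x = 1 := min_eq_left h1
        have hcx := hcpos x hx
        have hpow : (1:ℝ) ≤ (α * c x) ^ (k-1) := one_le_pow₀ h1
        have : (1:ℝ) ≤ α ^ (k-1) * (a x)⁻¹ := by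
          rw [mul_pow] at hpow
          rwa [hc, hrpow] at hpow
        have hAge : a x ≤ α ^ (k-1) := by
          have h2 := mul_le_mul_of_nonneg_right this hA.le
          rw [one_mul, mul_assoc, inv_mul_cancel₀ hA.ne', mul_one] at h2
          exact h2
        have hfg : f x - g x ≤ 0 := by rw [hgx]; linarith
        have hstep2 : (k:ℝ) * α ^ (k-1) * (f x - g x) ≤
            a x * ((k:ℝ) * g x ^ (k-1) * (f x - g x)) := by
          rw [hgx]
          simp only [one_pow, mul_one]
          have hk0 : (0:ℝ) ≤ (k:ℝ) := Nat.cast_nonneg k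
          nlinarith [mul_nonneg (mul_nonneg hk0 (sub_nonneg.mpr hAge))
            (sub_nonneg.mpr hf1)]
        linarith
      · -- g x = α * c x, and a x * g^(k-1) = α^(k-1)
        have hgx : g x = α * c x := min_eq_right h1.le
        have : a x * g x ^ (k-1) = α ^ (k-1) := by
          rw [hgx, mul_pow, hc, hrpow]
          field_simp
        have heq : a x * ((k:ℝ) * g x ^ (k-1) * (f x - g x)) =
            (k:ℝ) * α ^ (k-1) * (f x - g x) := by
          rw [← this]; ring
        rw [heq] at hstep1
        linarith
    -- integrate
    have hmono : ∫ x in Icc ε 1, (k:ℝ) * α ^ (k-1) * (f x - g x) ≤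
        ∫ x in Icc ε 1, (a x * f x ^ k - a x * g x ^ k) :=
      setIntegral_mono_on hint_fg (hint_afk.sub hint_agk) measurableSet_Icc key
    have hsub1 : ∫ x in Icc ε 1, (a x * f x ^ k - a x * g x ^ k) =
        (∫ x in Icc ε 1, a x * f x ^ k) - ∫ x in Icc ε 1, a x * g x ^ k :=
      integral_sub hint_afk hint_agk
    have hsub2 : ∫ x in Icc ε 1, (f x - g x) =
        (∫ x in Icc ε 1, (1 - g x)) - ∫ x in Icc ε 1, (1 - f x) := by
      have hfun : (fun x => f x - g x) = fun x => (1 - g x) - (1 - f x) := by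
        funext x; ring
      rw [hfun, integral_sub hint_g1 hint_f1]
    have hconstmul : ∫ x in Icc ε 1, (k:ℝ) * α ^ (k-1) * (f x - g x) =
        (k:ℝ) * α ^ (k-1) * ∫ x in Icc ε 1, (f x - g x) :=
      integral_const_mul _ _
    have hIf : (∫ x in Icc ε 1, (1 - f x)) ≤ T' := by
      apply le_min hfT
      calc (∫ x in Icc ε 1, (1 - f x)) ≤ ∫ x in Icc ε 1, (1:ℝ) := by
            apply setIntegral_mono_on hint_f1 (integrableOn_const measure_Icc_lt_top.ne)
              measurableSet_Icc
            intro x hx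
            linarith [(hf01 x hx).1]
        _ = 1 - ε := by rw [setIntegral_const, smul_eq_mul, mul_one, measureReal_def, hvol]
    have hΦαg : (∫ x in Icc ε 1, (1 - g x)) = T' := hΦα
    have hnn : 0 ≤ (k:ℝ) * α ^ (k-1) * ∫ x in Icc ε 1, (f x - g x) := by
      apply mul_nonneg (mul_nonneg (Nat.cast_nonneg k) (pow_nonneg hα0 _))
      rw [hsub2, hΦαg]
      linarith
    rw [hconstmul] at hmono
    rw [hsub1] at hmono
    linarith
end

section
/- Let M ≥ 1 be an integer and let N : {1,…,M} × ℕ → [0,1] satisfy Σ_{x=1}^M (1 − N(x,t)) ≤ t for every t ∈ ℕ. Then (1/M) · Σ_{x=1}^M (1/x) · Σ_{t=0}^∞ N(x,t) ≥ 1, where the inner infinite sum is taken in the extended nonnegative reals [0,∞]. -/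
open MeasureTheory ENNReal

lemma one_searcher_step (M : ℕ) (N : ℕ → ℕ → ℝ)
    (hrange : ∀ x ∈ Finset.Icc 1 M, ∀ t : ℕ, N x t ∈ Set.Icc (0:ℝ) 1)
    (hcol : ∀ t : ℕ, (∑ x ∈ Finset.Icc 1 M, (1 - N x t)) ≤ t) (t : ℕ) :
    (∑ x ∈ Finset.Icc 1 M, (if t + 1 ≤ x then 1/(x:ℝ) else 0)) ≤
      ∑ x ∈ Finset.Icc 1 M, (1/(x:ℝ)) * N x t := by
  have hdiff : ∀ x ∈ Finset.Icc 1 M,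
      (if t + 1 ≤ x then 1/(x:ℝ) else 0) - (1/(x:ℝ)) * N x t ≤
      (1/((t:ℝ)+1)) * ((if t + 1 ≤ x then (1:ℝ) else 0) - N x t) := by
    intro x hx
    obtain ⟨hx1, hxM⟩ := Finset.mem_Icc.mp hx
    have hxpos : (0:ℝ) < x := by exact_mod_cast hx1
    have htpos : (0:ℝ) < (t:ℝ) + 1 := by positivity
    obtain ⟨hN0, hN1⟩ := hrange x hx t
    by_cases h : t + 1 ≤ x
    · simp only [if_pos h]
      have hle : ((t:ℝ)+1) ≤ (x:ℝ) := by exact_mod_cast h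
      have hxi : 1/(x:ℝ) ≤ 1/((t:ℝ)+1) := by
        apply one_div_le_one_div_of_le htpos hle
      nlinarith
    · simp only [if_neg h]
      have hle : (x:ℝ) ≤ ((t:ℝ)+1) := by
        have : x ≤ t + 1 := by omega
        exact_mod_cast this
      have hxi : 1/((t:ℝ)+1) ≤ 1/(x:ℝ) := one_div_le_one_div_of_le hxpos hle
      nlinarith
  have hsum := Finset.sum_le_sum hdiff
  rw [Finset.sum_sub_distrib, ← Finset.mul_sum, Finset.sum_sub_distrib] at hsum
  -- compute the indicator sum of ones
  have hcard : (∑ x ∈ Finset.Icc 1 M, (if t + 1 ≤ x then (1:ℝ) else 0))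
      = ((Finset.Icc (t+1) M).card : ℝ) := by
    rw [← Finset.sum_filter]
    simp only [Finset.sum_const, nsmul_eq_mul, mul_one]
    congr 1
    congr 1
    ext y
    simp only [Finset.mem_filter, Finset.mem_Icc]
    omega
  have hcardval : ((Finset.Icc (t+1) M).card : ℝ) = (M : ℝ) - min t M := by
    rw [Nat.card_Icc]
    have : M + 1 - (t+1) = M - min t M := by omega
    rw [this]
    have hminM : min t M ≤ M := min_le_right t M
    push_cast [Nat.cast_sub hminM]
    ring
  -- column requirement gives sum N ≥ M - t ≥ M - min t M ... careful
  have hcolN : (M:ℝ) - ∑ x ∈ Finset.Icc 1 M, N x t ≤ t := by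
    have := hcol t
    rw [Finset.sum_sub_distrib, Finset.sum_const, Nat.card_Icc] at this
    simp only [nsmul_eq_mul, mul_one] at this
    have hM1 : M + 1 - 1 = M := by omega
    rw [hM1] at this
    linarith
  have hNnonneg : 0 ≤ ∑ x ∈ Finset.Icc 1 M, N x t :=
    Finset.sum_nonneg fun x hx => (hrange x hx t).1
  have hrhs : (1/((t:ℝ)+1)) * ((∑ x ∈ Finset.Icc 1 M, (if t + 1 ≤ x then (1:ℝ) else 0))
      - ∑ x ∈ Finset.Icc 1 M, N x t) ≤ 0 := by
    rw [hcard, hcardval]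
    have hbr : (M : ℝ) - min t M - ∑ x ∈ Finset.Icc 1 M, N x t ≤ 0 := by
      rcases le_or_gt t M with h | h
      · rw [min_eq_left h]; linarith
      · rw [min_eq_right h.le]; linarith
    have : (0:ℝ) < 1/((t:ℝ)+1) := by positivity
    nlinarith
  linarith

lemma one_searcher_real (M : ℕ) (hM : 1 ≤ M) (N : ℕ → ℕ → ℝ)
    (hrange : ∀ x ∈ Finset.Icc 1 M, ∀ t : ℕ, N x t ∈ Set.Icc (0:ℝ) 1)
    (hcol : ∀ t : ℕ, (∑ x ∈ Finset.Icc 1 M, (1 - N x t)) ≤ t) :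
    (M : ℝ) ≤ ∑ x ∈ Finset.Icc 1 M, (1/(x:ℝ)) * ∑ t ∈ Finset.range M, N x t := by
  have hswap : ∑ x ∈ Finset.Icc 1 M, (1/(x:ℝ)) * ∑ t ∈ Finset.range M, N x t
      = ∑ t ∈ Finset.range M, ∑ x ∈ Finset.Icc 1 M, (1/(x:ℝ)) * N x t := by
    rw [Finset.sum_comm]
    exact Finset.sum_congr rfl fun x _ => Finset.mul_sum _ _ _
  rw [hswap]
  have h1 : ∑ t ∈ Finset.range M, ∑ x ∈ Finset.Icc 1 M,
      (if t + 1 ≤ x then 1/(x:ℝ) else 0)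
      ≤ ∑ t ∈ Finset.range M, ∑ x ∈ Finset.Icc 1 M, (1/(x:ℝ)) * N x t :=
    Finset.sum_le_sum fun t _ => one_searcher_step M N hrange hcol t
  refine le_trans ?_ h1
  rw [Finset.sum_comm]
  have hx1 : ∀ x ∈ Finset.Icc 1 M,
      ∑ t ∈ Finset.range M, (if t + 1 ≤ x then 1/(x:ℝ) else 0) = 1 := by
    intro x hx
    obtain ⟨hxa, hxb⟩ := Finset.mem_Icc.mp hx
    rw [← Finset.sum_filter]
    have hfilt : (Finset.range M).filter (fun t => t + 1 ≤ x) = Finset.range x := by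
      ext y
      simp only [Finset.mem_filter, Finset.mem_range]
      omega
    rw [hfilt, Finset.sum_const, Finset.card_range, nsmul_eq_mul]
    field_simp
  rw [Finset.sum_congr rfl hx1, Finset.sum_const, Nat.card_Icc, nsmul_eq_mul, mul_one]
  have : M + 1 - 1 = M := by omega
  rw [this]

/-- For `M ≥ 1` and a matrix `N : {1,…,M} × ℕ → [0,1]` satisfying the
discrete column requirement `Σ_{x=1}^M (1 - N(x,t)) ≤ t`, the inverse speed-up of one
searcher, `(1/M)·Σ_{x=1}^M (1/x)·Σ_{t≥0} N(x,t)` (inner sum in `[0,∞]`), is at least 1. -/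
theorem one_searcher (M : ℕ) (hM : 1 ≤ M) (N : ℕ → ℕ → ℝ)
    (hrange : ∀ x ∈ Finset.Icc 1 M, ∀ t : ℕ, N x t ∈ Set.Icc (0:ℝ) 1)
    (hcol : ∀ t : ℕ, (∑ x ∈ Finset.Icc 1 M, (1 - N x t)) ≤ t) :
    (1 : ℝ≥0∞) ≤ ENNReal.ofReal (1 / (M:ℝ)) *
      ∑ x ∈ Finset.Icc 1 M, ENNReal.ofReal (1 / (x:ℝ)) *
        ∑' t : ℕ, ENNReal.ofReal (N x t) := by
  have hMpos : (0:ℝ) < M := by exact_mod_cast hM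
  -- lower bound tsum by partial sums
  have h2 : ∑ x ∈ Finset.Icc 1 M, ENNReal.ofReal (1 / (x:ℝ)) *
      ∑ t ∈ Finset.range M, ENNReal.ofReal (N x t)
      ≤ ∑ x ∈ Finset.Icc 1 M, ENNReal.ofReal (1 / (x:ℝ)) *
      ∑' t : ℕ, ENNReal.ofReal (N x t) :=
    Finset.sum_le_sum fun x _ => mul_le_mul_right (ENNReal.sum_le_tsum _) _
  refine le_trans ?_ (mul_le_mul_right h2 _)
  -- convert the finite ENNReal expression to ofReal of a real expression
  have h3 : ∑ x ∈ Finset.Icc 1 M, ENNReal.ofReal (1 / (x:ℝ)) *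
      ∑ t ∈ Finset.range M, ENNReal.ofReal (N x t)
      = ENNReal.ofReal (∑ x ∈ Finset.Icc 1 M, (1/(x:ℝ)) * ∑ t ∈ Finset.range M, N x t) := by
    rw [ENNReal.ofReal_sum_of_nonneg]
    · refine Finset.sum_congr rfl fun x hx => ?_
      rw [ENNReal.ofReal_mul (by positivity),
        ENNReal.ofReal_sum_of_nonneg fun t _ => (hrange x hx t).1]
    · intro x hx
      have h0 : 0 ≤ ∑ t ∈ Finset.range M, N x t :=
        Finset.sum_nonneg fun t _ => (hrange x hx t).1
      positivity
  rw [h3]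
  have hkey := one_searcher_real M hM N hrange hcol
  calc (1:ℝ≥0∞) = ENNReal.ofReal (1 / (M:ℝ)) * ENNReal.ofReal (M:ℝ) := by
        rw [← ENNReal.ofReal_mul (by positivity)]
        rw [one_div, inv_mul_cancel₀ (ne_of_gt hMpos), ENNReal.ofReal_one]
    _ ≤ ENNReal.ofReal (1 / (M:ℝ)) *
        ENNReal.ofReal (∑ x ∈ Finset.Icc 1 M, (1/(x:ℝ)) * ∑ t ∈ Finset.range M, N x t) :=
        mul_le_mul_right (ENNReal.ofReal_le_ofReal hkey) _
end

section
/- Let M ≥ 1 and t be integers with 0 ≤ t ≤ M, and let f : {1,…,M} → [0,1] satisfy Σ_{x=1}^M (1 − f(x)) ≤ t. Then Σ_{x=1}^M f(x)/x ≥ Σ_{x=t+1}^M 1/x. -/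
/-- per-column minimization: For integers `1 ≤ M` and `0 ≤ t ≤ M`, and
`f : {1,…,M} → [0,1]` with `Σ_{x=1}^M (1 - f(x)) ≤ t`, we have
`Σ_{x=1}^M f(x)/x ≥ Σ_{x=t+1}^M 1/x`. -/
theorem per_column_min (M : ℕ) (hM : 1 ≤ M) (t : ℕ) (ht : t ≤ M) (f : ℕ → ℝ)
    (hrange : ∀ x ∈ Finset.Icc 1 M, f x ∈ Set.Icc (0:ℝ) 1)
    (hcol : (∑ x ∈ Finset.Icc 1 M, (1 - f x)) ≤ t) :
    (∑ x ∈ Finset.Icc (t + 1) M, 1 / (x:ℝ)) ≤ ∑ x ∈ Finset.Icc 1 M, f x / x := by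
  set S1 := Finset.Icc 1 t with hS1
  set S2 := Finset.Icc (t + 1) M with hS2
  have hsplit : Finset.Icc 1 M = S1 ∪ S2 := by
    ext x; simp only [hS1, hS2, Finset.mem_Icc, Finset.mem_union]; omega
  have hdisj : Disjoint S1 S2 := by
    rw [Finset.disjoint_left]; intro x hx hx'
    simp only [hS1, hS2, Finset.mem_Icc] at hx hx'; omega
  have hsub1 : ∀ x ∈ S1, x ∈ Finset.Icc 1 M := by
    intro x hx; simp only [hS1, Finset.mem_Icc] at hx ⊢; omega
  have hsub2 : ∀ x ∈ S2, x ∈ Finset.Icc 1 M := by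
    intro x hx; simp only [hS2, Finset.mem_Icc] at hx ⊢; omega
  rw [hsplit, Finset.sum_union hdisj]
  rw [hsplit, Finset.sum_union hdisj] at hcol
  -- sum over S1 of (1 - f) = t - A where A = sum of f over S1
  have hcard : (S1.card : ℝ) = t := by simp [hS1]
  have hA : ∑ x ∈ S1, (1 - f x) = t - ∑ x ∈ S1, f x := by
    rw [Finset.sum_sub_distrib, Finset.sum_const, nsmul_eq_mul, mul_one, hcard]
  have hBA : ∑ x ∈ S2, (1 - f x) ≤ ∑ x ∈ S1, f x := by
    rw [hA] at hcol; linarith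
  -- key chain
  have hpos : (0:ℝ) < (t:ℝ) + 1 := by positivity
  have h1 : ∑ x ∈ S2, (1 - f x) / x ≤ (∑ x ∈ S2, (1 - f x)) / ((t:ℝ) + 1) := by
    rw [Finset.sum_div]
    apply Finset.sum_le_sum
    intro x hx
    have hxm := hrange x (hsub2 x hx)
    have hxt : (t:ℝ) + 1 ≤ x := by
      simp only [hS2, Finset.mem_Icc] at hx
      exact_mod_cast Nat.le_of_eq rfl |>.trans (by exact_mod_cast hx.1)
    exact div_le_div_of_nonneg_left (by linarith [hxm.2]) hpos hxt |>.trans_eq rfl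
  have h2 : (∑ x ∈ S1, f x) / ((t:ℝ) + 1) ≤ ∑ x ∈ S1, f x / x := by
    rw [Finset.sum_div]
    apply Finset.sum_le_sum
    intro x hx
    have hxm := hrange x (hsub1 x hx)
    have hx1 : 1 ≤ x := by simp only [hS1, Finset.mem_Icc] at hx; omega
    have hxt : (x:ℝ) ≤ (t:ℝ) + 1 := by
      simp only [hS1, Finset.mem_Icc] at hx
      have : x ≤ t + 1 := by omega
      exact_mod_cast this
    have hxpos : (0:ℝ) < x := by exact_mod_cast hx1
    exact div_le_div_of_nonneg_left hxm.1 hxpos hxt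
  have h3 : ∑ x ∈ S2, (1 - f x) / x ≤ ∑ x ∈ S1, f x / x := by
    calc ∑ x ∈ S2, (1 - f x) / x ≤ (∑ x ∈ S2, (1 - f x)) / ((t:ℝ) + 1) := h1
      _ ≤ (∑ x ∈ S1, f x) / ((t:ℝ) + 1) := by
          apply div_le_div_of_nonneg_right hBA hpos.le |>.trans_eq rfl
      _ ≤ ∑ x ∈ S1, f x / x := h2
  have hexp : ∑ x ∈ S2, (1 - f x) / x = ∑ x ∈ S2, 1 / (x:ℝ) - ∑ x ∈ S2, f x / x := by
    rw [← Finset.sum_sub_distrib]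
    apply Finset.sum_congr rfl
    intro x hx; ring
  rw [hexp] at h3
  linarith
end

section
/- Let k ≥ 1 and M ≥ 1 be integers and let N_A : {1,…,M} × ℕ → [0,1] satisfy Σ_{x=1}^M (1 − N_A(x,t)) ≤ t for every t ∈ ℕ. Define N : [1, M+1) × [0,∞) → [0,1] by N(x,t) = N_A(⌊x⌋, ⌊t⌋). Then: (i) for every real t ≥ 0, ∫₁^{M+1} (1 − N(x,t)) dx ≤ t; and (ii) ∫₁^{M+1} ∫₀^∞ (1/x)·N(x,t)^k dt dx ≤ Σ_{x=1}^M (1/x) · Σ_{t=0}^∞ N_A(x,t)^k, where both sides are taken in the extended nonnegative reals [0,∞]. -/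
open MeasureTheory Set ENNReal

lemma unit_Ico_pairwise_disjoint :
    Pairwise (Function.onFun Disjoint fun n : ℕ => Ico (n : ℝ) ((n : ℝ) + 1)) := by
  intro a b hab
  simp only [Function.onFun]
  rw [Set.disjoint_left]
  intro x hxa hxb
  exact hab ((Nat.floor_eq_on_Ico a x hxa).symm.trans (Nat.floor_eq_on_Ico b x hxb))

lemma Ico_eq_biUnion (M : ℕ) :
    Ico (1:ℝ) ((M:ℝ) + 1) = ⋃ n ∈ Finset.Icc 1 M, Ico (n : ℝ) ((n : ℝ) + 1) := by
  ext x
  simp only [mem_Ico, mem_iUnion, Finset.mem_Icc, exists_prop]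
  constructor
  · rintro ⟨h1, h2⟩
    refine ⟨⌊x⌋₊, ⟨Nat.le_floor (by exact_mod_cast h1), ?_⟩, Nat.floor_le (by linarith), Nat.lt_floor_add_one x⟩
    have hlt : ⌊x⌋₊ < M + 1 := by
      rw [Nat.floor_lt (by linarith)]
      push_cast
      linarith
    omega
  · rintro ⟨n, ⟨h1, h2⟩, h3, h4⟩
    have hn1 : (1:ℝ) ≤ (n:ℝ) := by exact_mod_cast h1
    have hnM : (n:ℝ) ≤ (M:ℝ) := by exact_mod_cast h2
    exact ⟨by linarith, by linarith⟩

lemma Ici_eq_iUnion : Ici (0:ℝ) = ⋃ n : ℕ, Ico (n : ℝ) ((n : ℝ) + 1) := by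
  ext t
  simp only [mem_Ici, mem_iUnion, mem_Ico]
  constructor
  · intro ht
    exact ⟨⌊t⌋₊, Nat.floor_le ht, Nat.lt_floor_add_one t⟩
  · rintro ⟨n, h1, _⟩
    exact le_trans (Nat.cast_nonneg n) h1

/-- from matrices to functions: Let `N_A : {1,…,M} × ℕ → [0,1]` satisfy
the discrete column requirement, and define `N(x,t) = N_A(⌊x⌋,⌊t⌋)` on
`[1,M+1) × [0,∞)`. Then (i) `N` satisfies the continuous column requirement, and
(ii) `∫₁^{M+1} ∫₀^∞ (1/x)·N(x,t)^k dt dx ≤ Σ_{x=1}^M (1/x)·Σ_{t≥0} N_A(x,t)^k`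
(both sides in `[0,∞]`). -/
theorem matrix_to_function (k M : ℕ) (hk : 1 ≤ k) (hM : 1 ≤ M) (NA : ℕ → ℕ → ℝ)
    (hrange : ∀ x ∈ Finset.Icc 1 M, ∀ t : ℕ, NA x t ∈ Set.Icc (0:ℝ) 1)
    (hcol : ∀ t : ℕ, (∑ x ∈ Finset.Icc 1 M, (1 - NA x t)) ≤ t) :
    (∀ t : ℝ, 0 ≤ t →
      (∫ x in Ico (1:ℝ) ((M:ℝ) + 1), (1 - NA ⌊x⌋₊ ⌊t⌋₊)) ≤ t) ∧
    (∫⁻ x in Ico (1:ℝ) ((M:ℝ) + 1), ∫⁻ t in Ici (0:ℝ),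
        ENNReal.ofReal ((1 / x) * NA ⌊x⌋₊ ⌊t⌋₊ ^ k)) ≤
      ∑ x ∈ Finset.Icc 1 M, ENNReal.ofReal (1 / (x:ℝ)) *
        ∑' t : ℕ, ENNReal.ofReal (NA x t ^ k) := by
  constructor
  · -- Part (i)
    intro t ht
    have key : (∫ x in Ico (1:ℝ) ((M:ℝ) + 1), (1 - NA ⌊x⌋₊ ⌊t⌋₊))
        = ∑ n ∈ Finset.Icc 1 M, (1 - NA n ⌊t⌋₊) := by
      rw [Ico_eq_biUnion M,
        integral_biUnion_finset _ (fun n _ => measurableSet_Ico)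
          (unit_Ico_pairwise_disjoint.set_pairwise _)
          (fun n _ => ((integrableOn_const (C := 1 - NA n ⌊t⌋₊) measure_Ico_lt_top.ne).congr_fun
            (fun x hx => by rw [Nat.floor_eq_on_Ico n x hx]) measurableSet_Ico))]
      refine Finset.sum_congr rfl fun n _ => ?_
      rw [setIntegral_congr_fun measurableSet_Ico
        (fun x hx => by rw [Nat.floor_eq_on_Ico n x hx]), setIntegral_const,
        Real.volume_real_Ico]
      simp
    rw [key]
    calc ∑ n ∈ Finset.Icc 1 M, (1 - NA n ⌊t⌋₊) ≤ (⌊t⌋₊ : ℝ) := hcol ⌊t⌋₊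
      _ ≤ t := Nat.floor_le ht
  · -- Part (ii)
    have inner : ∀ n ∈ Finset.Icc 1 M, ∀ x ∈ Ico (n : ℝ) ((n : ℝ) + 1),
        (∫⁻ t in Ici (0:ℝ), ENNReal.ofReal ((1 / x) * NA ⌊x⌋₊ ⌊t⌋₊ ^ k)) ≤
        ENNReal.ofReal (1 / (n:ℝ)) * ∑' m : ℕ, ENNReal.ofReal (NA n m ^ k) := by
      intro n hn x hx
      have hn1 : 1 ≤ n := (Finset.mem_Icc.mp hn).1
      have hn0 : (0:ℝ) < (n:ℝ) := by exact_mod_cast hn1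
      have hfx : ⌊x⌋₊ = n := Nat.floor_eq_on_Ico n x hx
      rw [Ici_eq_iUnion, lintegral_iUnion (fun i => measurableSet_Ico)
        unit_Ico_pairwise_disjoint]
      have step : ∀ m : ℕ,
          (∫⁻ t in Ico (m : ℝ) ((m : ℝ) + 1),
              ENNReal.ofReal ((1 / x) * NA ⌊x⌋₊ ⌊t⌋₊ ^ k))
          = ENNReal.ofReal ((1 / x) * NA n m ^ k) := by
        intro m
        rw [setLIntegral_congr_fun measurableSet_Ico
          (fun t ht => by rw [Nat.floor_eq_on_Ico m t ht, hfx]),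
          setLIntegral_const, Real.volume_Ico]
        simp
      simp only [step]
      calc ∑' m : ℕ, ENNReal.ofReal ((1 / x) * NA n m ^ k)
          ≤ ∑' m : ℕ, ENNReal.ofReal (1 / (n:ℝ)) * ENNReal.ofReal (NA n m ^ k) := by
            refine ENNReal.tsum_le_tsum fun m => ?_
            rw [← ENNReal.ofReal_mul (by positivity)]
            refine ENNReal.ofReal_le_ofReal ?_
            refine mul_le_mul_of_nonneg_right ?_ (pow_nonneg (hrange n hn m).1 k)
            exact one_div_le_one_div_of_le hn0 hx.1
        _ = ENNReal.ofReal (1 / (n:ℝ)) * ∑' m : ℕ, ENNReal.ofReal (NA n m ^ k) :=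
            ENNReal.tsum_mul_left
    rw [Ico_eq_biUnion M,
      lintegral_biUnion_finset (unit_Ico_pairwise_disjoint.set_pairwise _)
        (fun n _ => measurableSet_Ico)]
    refine Finset.sum_le_sum fun n hn => ?_
    calc (∫⁻ x in Ico (n : ℝ) ((n : ℝ) + 1),
            ∫⁻ t in Ici (0:ℝ), ENNReal.ofReal ((1 / x) * NA ⌊x⌋₊ ⌊t⌋₊ ^ k))
        ≤ ∫⁻ _ in Ico (n : ℝ) ((n : ℝ) + 1),
            ENNReal.ofReal (1 / (n:ℝ)) * ∑' m : ℕ, ENNReal.ofReal (NA n m ^ k) :=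
          setLIntegral_mono' measurableSet_Ico (inner n hn)
      _ = ENNReal.ofReal (1 / (n:ℝ)) * ∑' m : ℕ, ENNReal.ofReal (NA n m ^ k) := by
          rw [setLIntegral_const, Real.volume_Ico]
          simp
end

section
/- For all integers b ≥ a ≥ 1 and every real φ with 0 < φ ≤ 1, the product ∏_{i=a}^{b} i/(i+φ) is at most (a/b)^φ. -/
lemma tele_prod (a : ℕ) (ha : 1 ≤ a) : ∀ b, a ≤ b →
    (∏ i ∈ Finset.Icc a b, ((i:ℝ) / ((i:ℝ) + 1))) = (a:ℝ) / ((b:ℝ) + 1) := by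
  intro b
  induction b with
  | zero => intro h; omega
  | succ n ih =>
    intro h
    rcases eq_or_lt_of_le h with h' | h'
    · subst h'; simp
    · have hn : a ≤ n := by omega
      rw [Finset.prod_Icc_succ_top h, ih hn]
      have hn0 : (0:ℝ) < (n:ℝ) + 1 := by positivity
      push_cast
      field_simp

/-- Gamma function property: For integers `b ≥ a ≥ 1` and real
`0 < φ ≤ 1`, `∏_{i=a}^b i/(i+φ) ≤ (a/b)^φ`. -/
theorem prod_le_rpow (a b : ℕ) (ha : 1 ≤ a) (hab : a ≤ b) (φ : ℝ)
    (hφ0 : 0 < φ) (hφ1 : φ ≤ 1) :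
    (∏ i ∈ Finset.Icc a b, ((i:ℝ) / ((i:ℝ) + φ))) ≤ ((a:ℝ) / (b:ℝ)) ^ φ := by
  have hb0 : (0:ℝ) < b := by exact_mod_cast lt_of_lt_of_le (by norm_num) (ha.trans hab)
  have key : (∏ i ∈ Finset.Icc a b, ((i:ℝ) / ((i:ℝ) + φ))) ≤
      (∏ i ∈ Finset.Icc a b, ((i:ℝ) / ((i:ℝ) + 1)) ^ φ) := by
    apply Finset.prod_le_prod
    · intro i hi
      have hi1 : 1 ≤ i := le_trans ha (Finset.mem_Icc.mp hi).1
      have hi0 : (0:ℝ) < i := by exact_mod_cast hi1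
      exact div_nonneg hi0.le (by positivity)
    · intro i hi
      have hi1 : 1 ≤ i := le_trans ha (Finset.mem_Icc.mp hi).1
      have hi0 : (0:ℝ) < i := by exact_mod_cast hi1
      have hbern : ((1:ℝ) + 1 / i) ^ φ ≤ 1 + φ * (1 / i) :=
        rpow_one_add_le_one_add_mul_self (le_trans (by norm_num) (by positivity : (0:ℝ) ≤ 1/(i:ℝ))) hφ0.le hφ1
      have h1 : ((i:ℝ) + 1) / i = 1 + 1 / i := by field_simp
      have h2 : ((i:ℝ) + φ) / i = 1 + φ * (1 / i) := by field_simp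
      have h3 : (((i:ℝ) + 1) / i) ^ φ ≤ ((i:ℝ) + φ) / i := by
        rw [h1, h2]; exact hbern
      have hip : (0:ℝ) < i + φ := by positivity
      have hi1p : (0:ℝ) < i + 1 := by positivity
      rw [Real.div_rpow hi0.le hi1p.le]
      rw [Real.div_rpow (by positivity) hi0.le] at h3
      rw [div_le_div_iff₀ (by positivity) hi0] at h3
      rw [div_le_div_iff₀ hip (by positivity)]
      nlinarith [h3]
  refine key.trans ?_
  rw [Real.finset_prod_rpow _ _ (fun i hi => by positivity) φ, tele_prod a ha b hab]
  apply Real.rpow_le_rpow (by positivity) _ hφ0.le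
  apply div_le_div_of_nonneg_left (by positivity) hb0 (by linarith)
end

section
/- For all integers k ≥ 2 and t ≥ a ≥ 1, the product ∏_{i=a}^{t} (1 − 1/(i·k − i + 1)) is at most (a/t)^{1/(k−1)}. -/
lemma telescope_prod (a : ℕ) (ha : 1 ≤ a) :
    ∀ t : ℕ, a ≤ t → (∏ i ∈ Finset.Icc a t, ((i:ℝ) / ((i:ℝ)+1))) = (a:ℝ) / ((t:ℝ)+1) := by
  intro t
  induction t with
  | zero => intro h; omega
  | succ n ih =>
    intro h
    rcases Nat.lt_or_ge a (n+1) with h1 | h2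
    · have han : a ≤ n := by omega
      rw [Finset.prod_Icc_succ_top (by omega : a ≤ n+1), ih han]
      have hn0 : ((n:ℝ)+1) ≠ 0 := by positivity
      push_cast
      field_simp
    · have : a = n+1 := by omega
      subst this
      rw [Finset.Icc_self, Finset.prod_singleton]

/-- For integers `k ≥ 2` and `t ≥ a ≥ 1`,
`∏_{i=a}^t (1 - 1/(ik - i + 1)) ≤ (a/t)^{1/(k-1)}`. -/
theorem prod_unchecked_le (k a t : ℕ) (hk : 2 ≤ k) (ha : 1 ≤ a) (hat : a ≤ t) :
    (∏ i ∈ Finset.Icc a t, (1 - 1 / ((i:ℝ) * (k:ℝ) - (i:ℝ) + 1))) ≤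
      ((a:ℝ) / (t:ℝ)) ^ ((1:ℝ) / ((k:ℝ) - 1)) := by
  set c : ℝ := (k:ℝ) - 1 with hcdef
  have hk2 : (2:ℝ) ≤ (k:ℝ) := by exact_mod_cast hk
  have hc1 : (1:ℝ) ≤ c := by simp only [hcdef]; linarith
  have hc0 : (0:ℝ) < c := by linarith
  -- nonnegativity of factors
  have hnn : ∀ i ∈ Finset.Icc a t, (0:ℝ) ≤ 1 - 1 / ((i:ℝ) * (k:ℝ) - (i:ℝ) + 1) := by
    intro i hi
    have hi1 : 1 ≤ i := le_trans ha (Finset.mem_Icc.mp hi).1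
    have hir : (1:ℝ) ≤ (i:ℝ) := by exact_mod_cast hi1
    have hd : (1:ℝ) ≤ (i:ℝ) * (k:ℝ) - (i:ℝ) + 1 := by nlinarith
    have : 1 / ((i:ℝ) * (k:ℝ) - (i:ℝ) + 1) ≤ 1 := by
      rw [div_le_one (by linarith)]; linarith
    linarith
  -- per-factor bound
  have hfac : ∀ i ∈ Finset.Icc a t,
      1 - 1 / ((i:ℝ) * (k:ℝ) - (i:ℝ) + 1) ≤ ((i:ℝ)/((i:ℝ)+1)) ^ ((1:ℝ)/c) := by
    intro i hi
    have hi1 : 1 ≤ i := le_trans ha (Finset.mem_Icc.mp hi).1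
    have hir : (1:ℝ) ≤ (i:ℝ) := by exact_mod_cast hi1
    have hic : (0:ℝ) < (i:ℝ) * c := by nlinarith
    have hrw : (i:ℝ) * (k:ℝ) - (i:ℝ) + 1 = (i:ℝ) * c + 1 := by
      simp only [hcdef]; ring
    have hx0 : (0:ℝ) ≤ 1 - 1 / ((i:ℝ) * c + 1) := by rw [← hrw]; exact hnn i hi
    rw [hrw]
    -- Bernoulli : (1 + 1/(i*c))^c ≥ 1 + 1/i
    have hb : 1 + c * (1/((i:ℝ)*c)) ≤ (1 + 1/((i:ℝ)*c)) ^ c :=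
      one_add_mul_self_le_rpow_one_add (le_trans (by norm_num : (-1:ℝ) ≤ 0) (by positivity)) hc1
    have hcu : c * (1/((i:ℝ)*c)) = 1/(i:ℝ) := by
      field_simp
    rw [hcu] at hb
    have hfeq : 1 - 1 / ((i:ℝ) * c + 1) = (1 + 1/((i:ℝ)*c))⁻¹ := by
      have h1 : ((i:ℝ)*c) ≠ 0 := hic.ne'
      have h2 : ((i:ℝ)*c + 1) ≠ 0 := by positivity
      rw [inv_eq_one_div]
      field_simp
      ring
    have hi0 : (0:ℝ) < 1 + 1/(i:ℝ) := by positivity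
    have hkey : (1 - 1 / ((i:ℝ) * c + 1)) ^ c ≤ (i:ℝ)/((i:ℝ)+1) := by
      rw [hfeq, Real.inv_rpow (by positivity)]
      have h1 : ((1 + 1/((i:ℝ)*c)) ^ c)⁻¹ ≤ (1 + 1/(i:ℝ))⁻¹ :=
        inv_anti₀ hi0 hb
      have h2 : (1 + 1/(i:ℝ))⁻¹ = (i:ℝ)/((i:ℝ)+1) := by
        have h3 : 1 + 1/(i:ℝ) = ((i:ℝ)+1)/(i:ℝ) := by
          field_simp
        rw [h3, inv_div]
      rw [h2] at h1
      exact h1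
    calc 1 - 1 / ((i:ℝ) * c + 1)
        = ((1 - 1 / ((i:ℝ) * c + 1)) ^ c) ^ ((1:ℝ)/c) := by
          rw [← Real.rpow_mul hx0, mul_one_div_cancel hc0.ne', Real.rpow_one]
      _ ≤ ((i:ℝ)/((i:ℝ)+1)) ^ ((1:ℝ)/c) :=
          Real.rpow_le_rpow (Real.rpow_nonneg hx0 c) hkey (by positivity)
  -- combine
  have hstep1 : (∏ i ∈ Finset.Icc a t, (1 - 1 / ((i:ℝ) * (k:ℝ) - (i:ℝ) + 1))) ≤
      ∏ i ∈ Finset.Icc a t, ((i:ℝ)/((i:ℝ)+1)) ^ ((1:ℝ)/c) :=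
    Finset.prod_le_prod hnn hfac
  have hstep2 : (∏ i ∈ Finset.Icc a t, ((i:ℝ)/((i:ℝ)+1)) ^ ((1:ℝ)/c)) =
      ((a:ℝ)/((t:ℝ)+1)) ^ ((1:ℝ)/c) := by
    rw [Real.finset_prod_rpow _ _ (fun i _ => by positivity) _,
      telescope_prod a ha t hat]
  have ht0 : (0:ℝ) < (t:ℝ) := by
    have : 1 ≤ t := le_trans ha hat
    exact_mod_cast this
  have hstep3 : ((a:ℝ)/((t:ℝ)+1)) ^ ((1:ℝ)/c) ≤ ((a:ℝ)/(t:ℝ)) ^ ((1:ℝ)/c) := by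
    apply Real.rpow_le_rpow (by positivity) _ (by positivity)
    exact div_le_div_of_nonneg_left (by positivity) ht0 (by linarith)
  calc (∏ i ∈ Finset.Icc a t, (1 - 1 / ((i:ℝ) * (k:ℝ) - (i:ℝ) + 1)))
      ≤ ((a:ℝ)/((t:ℝ)+1)) ^ ((1:ℝ)/c) := hstep2 ▸ hstep1
    _ ≤ ((a:ℝ)/(t:ℝ)) ^ ((1:ℝ)/c) := hstep3
end

section
/- Let k ≥ 2 and m ≥ 1 be integers and set M = k·m. Let x = k·x' for an integer x' with 1 ≤ x' ≤ m, and let t ∈ ℕ. Define N(x,t) = 1 if t < x'; N(x,t) = ∏_{i=x'}^{t} (1 − 1/(i·k − i + 1)) if x' ≤ t ≤ m; N(x,t) = (∏_{i=x'}^{m} (1 − 1/(i·k − i + 1))) · (∏_{i=m+1}^{t} (1 − 1/(M − i + 1))) if m < t < M; and N(x,t) = 0 if t ≥ M. Then N(x,t) ≤ OPT_k(x/M, t/M) for every such x and every t ∈ ℕ with t < M. -/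
/-- Telescoping product `∏ i/(i+1) = a/(b+1)`. -/
lemma tele1 (a b : ℕ) (hab : a ≤ b) :
    ∏ i ∈ Finset.Icc a b, ((i:ℝ)/(i+1)) = (a:ℝ)/((b:ℝ)+1) := by
  induction b, hab using Nat.le_induction with
  | base => simp
  | succ n hn ih =>
    rw [Finset.prod_Icc_succ_top (by omega : a ≤ n + 1), ih]
    have h1 : ((n:ℝ)+1) ≠ 0 := by positivity
    push_cast
    field_simp

/-- Telescoping product `∏_{i=m+1}^{t} (M-i)/(M-i+1) = (M-t)/(M-m)`. -/
lemma tele2 (m M : ℕ) (t : ℕ) (hmt : m ≤ t) (htM : t ≤ M) (hmM : m < M) :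
    ∏ i ∈ Finset.Icc (m+1) t, (((M:ℝ)-(i:ℝ))/((M:ℝ)-(i:ℝ)+1))
      = ((M:ℝ)-(t:ℝ))/((M:ℝ)-(m:ℝ)) := by
  induction t, hmt using Nat.le_induction with
  | base =>
    rw [Finset.Icc_eq_empty (by omega)]
    have : ((M:ℝ)-(m:ℝ)) ≠ 0 := by
      have : (m:ℝ) < (M:ℝ) := by exact_mod_cast hmM
      linarith
    simp [div_self this]
  | succ n hn ih =>
    have hnM : n < M := by omega
    have ih' := ih (by omega)
    rw [Finset.prod_Icc_succ_top (by omega : m + 1 ≤ n + 1), ih']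
    have h1 : ((M:ℝ)-(n:ℝ)) ≠ 0 := by
      have : (n:ℝ) < (M:ℝ) := by exact_mod_cast hnM
      linarith
    push_cast
    rw [show (M:ℝ)-((n:ℝ)+1)+1 = (M:ℝ)-(n:ℝ) from by ring]
    rw [div_mul_div_comm, mul_comm ((M:ℝ)-(m:ℝ)) ((M:ℝ)-(n:ℝ))]
    rw [mul_div_mul_left _ _ h1]

/-- Per-factor bound via Bernoulli's inequality. -/
lemma factor_le (k i : ℕ) (hk : 2 ≤ k) (hi : 1 ≤ i) :
    1 - 1/((i:ℝ)*(k:ℝ)-(i:ℝ)+1) ≤ ((i:ℝ)/((i:ℝ)+1)) ^ ((1:ℝ)/((k:ℝ)-1)) := by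
  have hK : (2:ℝ) ≤ (k:ℝ) := by exact_mod_cast hk
  have hI : (1:ℝ) ≤ (i:ℝ) := by exact_mod_cast hi
  set K := (k:ℝ)
  set I := (i:ℝ)
  have hI0 : (0:ℝ) < I := by linarith
  have hK1 : (0:ℝ) < K - 1 := by linarith
  have he0 : (0:ℝ) ≤ 1/(K-1) := by positivity
  have he1 : 1/(K-1) ≤ 1 := by rw [div_le_one hK1]; linarith
  have hb : ((1:ℝ)+1/I)^((1:ℝ)/(K-1)) ≤ 1 + (1/(K-1))*(1/I) :=
    rpow_one_add_le_one_add_mul_self (le_trans (by norm_num : (-1:ℝ) ≤ 0) (by positivity)) he0 he1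
  have hI1 : I/(I+1) = ((1:ℝ)+1/I)⁻¹ := by
    field_simp
  have key : (I/(I+1)) ^ ((1:ℝ)/(K-1)) = (((1:ℝ)+1/I)^((1:ℝ)/(K-1)))⁻¹ := by
    rw [hI1, ← Real.inv_rpow (by positivity)]
  rw [key]
  have hR : (0:ℝ) < ((1:ℝ)+1/I)^((1:ℝ)/(K-1)) := Real.rpow_pos_of_pos (by positivity) _
  have h1 : I*K - I + 1 ≠ 0 := by nlinarith
  have h2 : (K-1) ≠ 0 := ne_of_gt hK1
  have h3 : I ≠ 0 := ne_of_gt hI0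
  have h4 : (1:ℝ) + (1/(K-1))*(1/I) ≠ 0 := by positivity
  have heq : 1 - 1/(I*K-I+1) = (1 + (1/(K-1))*(1/I))⁻¹ := by
    field_simp
    ring
  rw [heq]
  exact inv_anti₀ hR hb

/-- Product bound: the product of algorithm factors is at most `(a/(b+1))^{1/(k-1)}`. -/
lemma prodP (k a b : ℕ) (hk : 2 ≤ k) (ha : 1 ≤ a) (hab : a ≤ b) :
    ∏ i ∈ Finset.Icc a b, (1 - 1/((i:ℝ)*(k:ℝ)-(i:ℝ)+1))
      ≤ ((a:ℝ)/((b:ℝ)+1)) ^ ((1:ℝ)/((k:ℝ)-1)) := by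
  have hK : (2:ℝ) ≤ (k:ℝ) := by exact_mod_cast hk
  have step0 : ∀ i ∈ Finset.Icc a b, 0 ≤ 1 - 1/((i:ℝ)*(k:ℝ)-(i:ℝ)+1) := by
    intro i hi
    simp only [Finset.mem_Icc] at hi
    have hI : (1:ℝ) ≤ (i:ℝ) := by exact_mod_cast (le_trans ha hi.1)
    have h1 : (1:ℝ) ≤ (i:ℝ)*(k:ℝ)-(i:ℝ)+1 := by nlinarith
    have h2 : 1/((i:ℝ)*(k:ℝ)-(i:ℝ)+1) ≤ 1 := by
      rw [div_le_one (by linarith)]; linarith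
    linarith
  calc ∏ i ∈ Finset.Icc a b, (1 - 1/((i:ℝ)*(k:ℝ)-(i:ℝ)+1))
      ≤ ∏ i ∈ Finset.Icc a b, ((i:ℝ)/((i:ℝ)+1)) ^ ((1:ℝ)/((k:ℝ)-1)) := by
        apply Finset.prod_le_prod step0
        intro i hi
        simp only [Finset.mem_Icc] at hi
        exact factor_le k i hk (le_trans ha hi.1)
    _ = (∏ i ∈ Finset.Icc a b, ((i:ℝ)/((i:ℝ)+1))) ^ ((1:ℝ)/((k:ℝ)-1)) :=
        Real.finset_prod_rpow _ _ (fun i _ => by positivity) _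
    _ = ((a:ℝ)/((b:ℝ)+1)) ^ ((1:ℝ)/((k:ℝ)-1)) := by rw [tele1 a b hab]

set_option maxHeartbeats 1000000 in
/-- Let `k ≥ 2`, `m ≥ 1`, `M = k·m`, `x = k·x'` with `1 ≤ x' ≤ m`, and
`t ∈ ℕ` with `t < M`. The probability `N(x,t)` that box `x` is unchecked at time `t`
by a searcher running Algorithm 2 (given by the displayed product formulas) satisfies
`N(x,t) ≤ OPT_k(x/M, t/M)`. -/
theorem alg_matrix_le_OPT (k m : ℕ) (hk : 2 ≤ k) (hm : 1 ≤ m) (M : ℕ) (hM : M = k * m)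
    (x' : ℕ) (hx'1 : 1 ≤ x') (hx'2 : x' ≤ m) (t : ℕ) (ht : t < M) :
    (if t < x' then (1:ℝ)
     else if t ≤ m then
       ∏ i ∈ Finset.Icc x' t, (1 - 1 / ((i:ℝ) * (k:ℝ) - (i:ℝ) + 1))
     else
       (∏ i ∈ Finset.Icc x' m, (1 - 1 / ((i:ℝ) * (k:ℝ) - (i:ℝ) + 1))) *
         ∏ i ∈ Finset.Icc (m + 1) t, (1 - 1 / ((M:ℝ) - (i:ℝ) + 1)))
      ≤ OPTk k (((k:ℝ) * (x':ℝ)) / (M:ℝ)) ((t:ℝ) / (M:ℝ)) := by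
  have hK : (2:ℝ) ≤ (k:ℝ) := by exact_mod_cast hk
  have hmM : m < M := by
    have : 2 * m ≤ k * m := Nat.mul_le_mul_right m hk
    omega
  have hM0 : 0 < M := by omega
  have hMR : (0:ℝ) < (M:ℝ) := by exact_mod_cast hM0
  have hMcast : (M:ℝ) = (k:ℝ) * (m:ℝ) := by rw [hM]; push_cast; ring
  have hmR : (1:ℝ) ≤ (m:ℝ) := by exact_mod_cast hm
  have hx'R : (1:ℝ) ≤ (x':ℝ) := by exact_mod_cast hx'1
  have hx'mR : (x':ℝ) ≤ (m:ℝ) := by exact_mod_cast hx'2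
  have htR : (t:ℝ) < (M:ℝ) := by exact_mod_cast ht
  have hK0 : (0:ℝ) < (k:ℝ) := by linarith
  have hK1 : (0:ℝ) < (k:ℝ) - 1 := by linarith
  have he0 : (0:ℝ) ≤ (1:ℝ)/((k:ℝ)-1) := by positivity
  have hnot1 : ¬ ((1:ℝ) ≤ (t:ℝ)/(M:ℝ)) := by
    rw [not_le, div_lt_one hMR]; exact htR
  have hxbase : ((k:ℝ) * (x':ℝ)) / (M:ℝ) = (x':ℝ)/(m:ℝ) := by
    rw [hMcast]
    field_simp
  by_cases h1 : t < x'
  · -- Case 1 : N = 1, OPT = 1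
    rw [if_pos h1]
    have htx : (t:ℝ) < (x':ℝ) := by exact_mod_cast h1
    have hnot2 : ¬ ((1:ℝ)/(k:ℝ) ≤ (t:ℝ)/(M:ℝ)) := by
      rw [not_le, div_lt_div_iff₀ hMR hK0]
      nlinarith
    have hnot3 : ¬ ((((k:ℝ) * (x':ℝ)) / (M:ℝ)) / (k:ℝ) ≤ (t:ℝ)/(M:ℝ)) := by
      rw [not_le, hxbase, div_div, hMcast]
      rw [div_lt_div_iff₀ (by positivity) (by positivity)]
      nlinarith
    rw [OPTk, if_neg hnot1, if_neg hnot2, if_neg hnot3]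
  · push_neg at h1
    by_cases h2 : t ≤ m
    · -- Case 2 : x' ≤ t ≤ m
      rw [if_neg (by omega), if_pos h2]
      have hbound := prodP k x' t hk hx'1 h1
      have htR1 : (1:ℝ) ≤ (t:ℝ) := by exact_mod_cast (le_trans hx'1 h1)
      have ht0 : (0:ℝ) < (t:ℝ) := by linarith
      have hx't : (x':ℝ) ≤ (t:ℝ) := by exact_mod_cast h1
      by_cases h3 : t < m
      · -- strict: second branch of OPT is the rpow branch
        have hnot2 : ¬ ((1:ℝ)/(k:ℝ) ≤ (t:ℝ)/(M:ℝ)) := by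
          rw [not_le, div_lt_div_iff₀ hMR hK0]
          have : (t:ℝ) < (m:ℝ) := by exact_mod_cast h3
          nlinarith
        have hyes3 : (((k:ℝ) * (x':ℝ)) / (M:ℝ)) / (k:ℝ) ≤ (t:ℝ)/(M:ℝ) := by
          rw [hxbase, div_div, hMcast]
          rw [div_le_div_iff₀ (by positivity) (by positivity)]
          nlinarith
        rw [OPTk, if_neg hnot1, if_neg hnot2, if_pos hyes3]
        have hval : ((k:ℝ) * (x':ℝ)) / (M:ℝ) / ((k:ℝ) * ((t:ℝ)/(M:ℝ))) = (x':ℝ)/(t:ℝ) := by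
          field_simp
        rw [hval]
        refine le_trans hbound (Real.rpow_le_rpow (by positivity) ?_ he0)
        apply div_le_div_of_nonneg_left (by positivity) ht0
        linarith
      · -- t = m : second branch of OPT
        have htm : t = m := by omega
        subst htm
        have hyes2 : (1:ℝ)/(k:ℝ) ≤ (t:ℝ)/(M:ℝ) := by
          rw [div_le_div_iff₀ hK0 hMR]
          nlinarith
        rw [OPTk, if_neg hnot1, if_pos hyes2, hxbase]
        have hpre : ((k:ℝ)/((k:ℝ)-1)) * (1 - (t:ℝ)/(M:ℝ)) = 1 := by
          rw [hMcast]
          field_simp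
        rw [hpre, one_mul]
        refine le_trans hbound (Real.rpow_le_rpow (by positivity) ?_ he0)
        apply div_le_div_of_nonneg_left (by positivity) (by linarith)
        linarith
    · -- Case 3 : m < t < M
      push_neg at h2
      rw [if_neg (by omega), if_neg (by omega)]
      have hyes2 : (1:ℝ)/(k:ℝ) ≤ (t:ℝ)/(M:ℝ) := by
        rw [div_le_div_iff₀ hK0 hMR]
        have : (m:ℝ) ≤ (t:ℝ) := by exact_mod_cast (le_of_lt h2)
        nlinarith
      rw [OPTk, if_neg hnot1, if_pos hyes2, hxbase]
      have hmRt : (m:ℝ) < (t:ℝ) := by exact_mod_cast h2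
      have hmMR : (m:ℝ) < (M:ℝ) := by exact_mod_cast hmM
      -- rewrite second product via telescoping
      have hBrw : ∏ i ∈ Finset.Icc (m + 1) t, (1 - 1 / ((M:ℝ) - (i:ℝ) + 1))
          = ((M:ℝ)-(t:ℝ))/((M:ℝ)-(m:ℝ)) := by
        rw [← tele2 m M t (le_of_lt h2) (le_of_lt ht) hmM]
        apply Finset.prod_congr rfl
        intro i hi
        simp only [Finset.mem_Icc] at hi
        have hiM : (i:ℝ) ≤ (M:ℝ) := by
          have : i ≤ M := by omega
          exact_mod_cast this
        have hd : ((M:ℝ) - (i:ℝ) + 1) ≠ 0 := by linarith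
        field_simp
        ring
      rw [hBrw]
      have hB0 : (0:ℝ) ≤ ((M:ℝ)-(t:ℝ))/((M:ℝ)-(m:ℝ)) := by
        apply div_nonneg <;> linarith
      have hA := prodP k x' m hk hx'1 hx'2
      have hOPT : ((k:ℝ)/((k:ℝ)-1)) * (1 - (t:ℝ)/(M:ℝ)) * ((x':ℝ)/(m:ℝ)) ^ ((1:ℝ)/((k:ℝ)-1))
          = (((M:ℝ)-(t:ℝ))/((M:ℝ)-(m:ℝ))) * ((x':ℝ)/(m:ℝ)) ^ ((1:ℝ)/((k:ℝ)-1)) := by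
        congr 1
        rw [hMcast]
        have hm0 : (m:ℝ) ≠ 0 := by linarith
        have hkm : (k:ℝ)*(m:ℝ) - (m:ℝ) ≠ 0 := by nlinarith
        field_simp
      rw [hOPT]
      calc (∏ i ∈ Finset.Icc x' m, (1 - 1 / ((i:ℝ) * (k:ℝ) - (i:ℝ) + 1))) *
            (((M:ℝ)-(t:ℝ))/((M:ℝ)-(m:ℝ)))
          ≤ ((x':ℝ)/((m:ℝ)+1)) ^ ((1:ℝ)/((k:ℝ)-1)) * (((M:ℝ)-(t:ℝ))/((M:ℝ)-(m:ℝ))) :=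
            mul_le_mul_of_nonneg_right hA hB0
        _ ≤ ((x':ℝ)/(m:ℝ)) ^ ((1:ℝ)/((k:ℝ)-1)) * (((M:ℝ)-(t:ℝ))/((M:ℝ)-(m:ℝ))) := by
            apply mul_le_mul_of_nonneg_right _ hB0
            refine Real.rpow_le_rpow (by positivity) ?_ he0
            apply div_le_div_of_nonneg_left (by positivity) (by linarith)
            linarith
        _ = (((M:ℝ)-(t:ℝ))/((M:ℝ)-(m:ℝ))) * ((x':ℝ)/(m:ℝ)) ^ ((1:ℝ)/((k:ℝ)-1)) := by ring
end
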